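/- arXiv:2411.03662 — 10 statements merged into one kernel-verified Lean document; each statement's English description precedes it below -/
import Mathlib

section
/- The family {Λ_a} is linearly independent over ℤ modulo 2: if c : ℕ → ℤ is a finitely supported function supported on positive integers and ∑_a c_a · Λ_a = 2z for some z ∈ ℤ[ℂ*], then every coefficient c_a is even. -/
open scoped Classical

/-- `Λ a ∈ ℤ[ℂˣ]`: the sum of the group-ring basis elements over all `a`-th roots of
unity in `ℂ`, i.e. the divisor of the polynomial `t ^ a - 1`. -/
noncomputable def Lambda (a : ℕ) : MonoidAlgebra ℤ ℂˣ :=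
  if h : a = 0 then 0
  else
    haveI : NeZero a := ⟨h⟩
    haveI : Fintype (rootsOfUnity a ℂ) := Fintype.ofFinite _
    ∑ ζ : rootsOfUnity a ℂ, MonoidAlgebra.single (ζ : ℂˣ) (1 : ℤ)

lemma lambda_apply (a : ℕ) (ha : a ≠ 0) (g : ℂˣ) :
    (Lambda a).coeff g = if g ^ a = 1 then 1 else 0 := by
  haveI : NeZero a := ⟨ha⟩
  rw [Lambda, dif_neg ha, MonoidAlgebra.coeff_sum, Finsupp.finset_sum_apply]
  by_cases hg : g ^ a = 1
  · rw [if_pos hg]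
    have hmem : g ∈ rootsOfUnity a ℂ := (mem_rootsOfUnity a g).mpr hg
    rw [Finset.sum_eq_single_of_mem (⟨g, hmem⟩ : rootsOfUnity a ℂ) (@Finset.mem_univ _ (Fintype.ofFinite _) _)]
    · simp [MonoidAlgebra.coeff_single]
    · intro b _ hb
      have : (b : ℂˣ) ≠ g := by
        intro hbg; exact hb (Subtype.ext hbg)
      simp [MonoidAlgebra.coeff_single, Finsupp.single_apply, this]
  · rw [if_neg hg]
    apply Finset.sum_eq_zero
    intro b _
    have : (b : ℂˣ) ≠ g := by
      intro hbg
      exact hg (hbg ▸ (mem_rootsOfUnity a (b : ℂˣ)).mp b.2)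
    simp [MonoidAlgebra.coeff_single, Finsupp.single_apply, this]

/-- The family `{Λ_a}` over positive integers `a` is linearly independent over `ℤ`
modulo `2`: if a `ℤ`-linear combination of the `Λ_a` is divisible by `2` in `ℤ[ℂˣ]`,
then every coefficient is even. -/
theorem lambda_linearIndependent_mod_two (c : ℕ →₀ ℤ) (hc : ∀ a ∈ c.support, 1 ≤ a)
    (z : MonoidAlgebra ℤ ℂˣ) (h : ∑ a ∈ c.support, c a • Lambda a = 2 * z) :
    ∀ a, Even (c a) := by
  -- coefficientwise consequence
  have key : ∀ g : ℂˣ, Even (∑ a ∈ c.support, c a * (if g ^ a = 1 then 1 else 0)) := by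
    intro g
    have hL : ∀ a ∈ c.support, (c a • Lambda a).coeff g = c a * (if g ^ a = 1 then 1 else 0) := by
      intro a ha
      rw [MonoidAlgebra.coeff_smul_apply, lambda_apply a (by have := hc a ha; omega) g, smul_eq_mul]
    have hcalc : _ := calc ∑ a ∈ c.support, c a * (if g ^ a = 1 then 1 else 0)
        = ∑ a ∈ c.support, (c a • Lambda a).coeff g := (Finset.sum_congr rfl hL).symm
      _ = (∑ a ∈ c.support, c a • Lambda a).coeff g := by
          rw [MonoidAlgebra.coeff_sum, Finsupp.finset_sum_apply]
      _ = (2 * z).coeff g := by rw [h]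
      _ = z.coeff g + z.coeff g := by rw [two_mul, MonoidAlgebra.coeff_add, Finsupp.add_apply]
    exact ⟨z.coeff g, hcalc⟩
  -- divisor-sum consequence
  have key2 : ∀ a : ℕ, 1 ≤ a → Even (∑ b ∈ c.support.filter (a ∣ ·), c b) := by
    intro a ha
    obtain ⟨ζ, hζ⟩ : ∃ ζ : ℂ, IsPrimitiveRoot ζ a :=
      ⟨_, Complex.isPrimitiveRoot_exp a (by omega)⟩
    have hu : IsPrimitiveRoot (hζ.isUnit (by omega)).unit a := hζ.isUnit_unit (by omega)
    have := key (hζ.isUnit (by omega)).unit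
    have heq : ∀ b ∈ c.support,
        c b * (if (hζ.isUnit (by omega : a ≠ 0)).unit ^ b = 1 then 1 else 0)
          = if a ∣ b then c b else 0 := by
      intro b _
      by_cases hd : a ∣ b
      · rw [if_pos (hu.pow_eq_one_iff_dvd b |>.mpr hd), if_pos hd, mul_one]
      · rw [if_neg (fun hh => hd ((hu.pow_eq_one_iff_dvd b).mp hh)), if_neg hd, mul_zero]
    rw [Finset.sum_congr rfl heq, ← Finset.sum_filter] at this
    exact this
  -- downward induction
  set M := c.support.sup id with hM
  have main : ∀ k : ℕ, ∀ a : ℕ, M + 1 ≤ a + k → Even (c a) := by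
    intro k
    induction k with
    | zero =>
      intro a ha
      have : a ∉ c.support := by
        intro hmem
        have := Finset.le_sup (f := id) hmem
        simp only [id] at this
        omega
      simp [Finsupp.notMem_support_iff.mp this]
    | succ k ih =>
      intro a ha
      by_cases hmem : a ∈ c.support
      · have ha1 : 1 ≤ a := hc a hmem
        have hsum := key2 a ha1
        have hsplit : c.support.filter (a ∣ ·)
            = insert a ((c.support.filter (a ∣ ·)).erase a) := by
          rw [Finset.insert_erase]
          exact Finset.mem_filter.mpr ⟨hmem, dvd_refl a⟩
        rw [hsplit, Finset.sum_insert (Finset.notMem_erase _ _)] at hsum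
        have hrest : Even (∑ b ∈ (c.support.filter (a ∣ ·)).erase a, c b) := by
          apply Finset.even_sum
          intro b hb
          obtain ⟨hne, hbf⟩ := Finset.mem_erase.mp hb
          obtain ⟨hbs, hdvd⟩ := Finset.mem_filter.mp hbf
          have hb1 : 1 ≤ b := hc b hbs
          have : a < b := lt_of_le_of_ne (Nat.le_of_dvd (by omega) hdvd) (Ne.symm hne)
          exact ih b (by omega)
        have := hsum.sub hrest
        simpa using this
      · simp [Finsupp.notMem_support_iff.mp hmem]
  intro a
  exact main (M + 1) a (by omega)
end

section
/- For all positive integers a and b, the identity Λ_a · Λ_b = gcd(a, b) · Λ_{lcm(a, b)} holds in the group ring ℤ[ℂ*]. -/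
open scoped Classical

def lambdaPhi (a b : ℕ) : (rootsOfUnity a ℂ × rootsOfUnity b ℂ) →* rootsOfUnity (Nat.lcm a b) ℂ where
  toFun p := ⟨(p.1 : ℂˣ) * (p.2 : ℂˣ),
    mul_mem (rootsOfUnity_le_of_dvd (Nat.dvd_lcm_left a b) p.1.2)
      (rootsOfUnity_le_of_dvd (Nat.dvd_lcm_right a b) p.2.2)⟩
  map_one' := by ext; simp
  map_mul' p q := by
    ext
    push_cast
    exact mul_mul_mul_comm _ _ _ _

lemma lambdaPhi_surjective (a b : ℕ) (ha : 0 < a) (hb : 0 < b) :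
    Function.Surjective (lambdaPhi a b) := by
  intro ξ
  have hg0 : 0 < Nat.gcd a b := Nat.gcd_pos_of_pos_left b ha
  have hicop : IsCoprime ((a / Nat.gcd a b : ℕ) : ℤ) ((b / Nat.gcd a b : ℕ) : ℤ) :=
    Nat.isCoprime_iff_coprime.mpr (Nat.coprime_div_gcd_div_gcd hg0)
  obtain ⟨x, y, hxy⟩ := hicop
  have hla : a * (b / Nat.gcd a b) = Nat.lcm a b := by
    rw [Nat.lcm, Nat.mul_div_assoc a (Nat.gcd_dvd_right a b)]
  have hlb : b * (a / Nat.gcd a b) = Nat.lcm a b := by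
    rw [Nat.gcd_comm a b, Nat.lcm_comm a b, Nat.lcm,
      Nat.mul_div_assoc b (Nat.gcd_dvd_right b a)]
  have hul : (ξ : ℂˣ) ^ ((Nat.lcm a b : ℕ) : ℤ) = 1 := by
    have := ξ.2
    rw [mem_rootsOfUnity] at this
    exact_mod_cast this
  have hz : ((ξ : ℂˣ) ^ (y * ((b / Nat.gcd a b : ℕ) : ℤ))) ^ a = 1 := by
    rw [← zpow_natCast _ a, ← zpow_mul]
    have h : y * ((b / Nat.gcd a b : ℕ) : ℤ) * (a : ℤ) = ((Nat.lcm a b : ℕ) : ℤ) * y := by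
      push_cast [← hla]; ring
    rw [h, zpow_mul, hul, one_zpow]
  have hw : ((ξ : ℂˣ) ^ (x * ((a / Nat.gcd a b : ℕ) : ℤ))) ^ b = 1 := by
    rw [← zpow_natCast _ b, ← zpow_mul]
    have h : x * ((a / Nat.gcd a b : ℕ) : ℤ) * (b : ℤ) = ((Nat.lcm a b : ℕ) : ℤ) * x := by
      push_cast [← hlb]; ring
    rw [h, zpow_mul, hul, one_zpow]
  refine ⟨(⟨(ξ : ℂˣ) ^ (y * ((b / Nat.gcd a b : ℕ) : ℤ)), (mem_rootsOfUnity _ _).mpr hz⟩,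
    ⟨(ξ : ℂˣ) ^ (x * ((a / Nat.gcd a b : ℕ) : ℤ)), (mem_rootsOfUnity _ _).mpr hw⟩), ?_⟩
  refine Subtype.ext ?_
  show (ξ : ℂˣ) ^ (y * ((b / Nat.gcd a b : ℕ) : ℤ)) * (ξ : ℂˣ) ^ (x * ((a / Nat.gcd a b : ℕ) : ℤ)) = (ξ : ℂˣ)
  have h1 : y * ((b / Nat.gcd a b : ℕ) : ℤ) + x * ((a / Nat.gcd a b : ℕ) : ℤ) = 1 := by
    linear_combination hxy
  rw [← zpow_add, h1, zpow_one]

/-- For positive integers `a` and `b`, `Λ_a · Λ_b = gcd(a,b) · Λ_{lcm(a,b)}` in `ℤ[ℂˣ]`. -/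
theorem lambda_mul_lambda (a b : ℕ) (ha : 1 ≤ a) (hb : 1 ≤ b) :
    Lambda a * Lambda b = (Nat.gcd a b : ℤ) • Lambda (Nat.lcm a b) := by
  have hphi : ∀ p : rootsOfUnity a ℂ × rootsOfUnity b ℂ,
      ((lambdaPhi a b) p : ℂˣ) = (p.1 : ℂˣ) * (p.2 : ℂˣ) := fun p => rfl
  have hsurj : Function.Surjective (lambdaPhi a b) :=
    lambdaPhi_surjective a b (by omega) (by omega)
  have ha0 : a ≠ 0 := by omega
  have hb0 : b ≠ 0 := by omega
  have hl0 : Nat.lcm a b ≠ 0 := Nat.lcm_ne_zero ha0 hb0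
  haveI : NeZero a := ⟨ha0⟩
  haveI : NeZero b := ⟨hb0⟩
  haveI : NeZero (Nat.lcm a b) := ⟨hl0⟩
  letI : Fintype (rootsOfUnity a ℂ) := Fintype.ofFinite _
  letI : Fintype (rootsOfUnity b ℂ) := Fintype.ofFinite _
  letI : Fintype (rootsOfUnity (Nat.lcm a b) ℂ) := Fintype.ofFinite _
  -- fiber cardinality
  have hc : ∀ y : rootsOfUnity (Nat.lcm a b) ℂ,
      (Finset.univ.filter fun p => (lambdaPhi a b) p = y).card = Nat.gcd a b := by
    have hconst : ∀ y : rootsOfUnity (Nat.lcm a b) ℂ,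
        (Finset.univ.filter fun p => (lambdaPhi a b) p = y).card
          = (Finset.univ.filter fun p => (lambdaPhi a b) p = 1).card := fun y =>
      MonoidHom.card_fiber_eq_of_mem_range _ (hsurj y) (hsurj 1)
    have htot : Fintype.card (rootsOfUnity a ℂ × rootsOfUnity b ℂ)
        = ∑ y : rootsOfUnity (Nat.lcm a b) ℂ, (Finset.univ.filter fun p => (lambdaPhi a b) p = y).card := by
      rw [← Finset.card_univ]
      exact Finset.card_eq_sum_card_fiberwise (fun x _ => Finset.mem_univ ((lambdaPhi a b) x))
    have hab : Fintype.card (rootsOfUnity a ℂ × rootsOfUnity b ℂ) = a * b := by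
      rw [Fintype.card_prod, Fintype.card_eq_nat_card, Fintype.card_eq_nat_card, Complex.card_rootsOfUnity, Complex.card_rootsOfUnity]
    have hl : Nat.lcm a b * (Finset.univ.filter fun p => (lambdaPhi a b) p = 1).card = a * b := by
      rw [← hab, htot]
      simp_rw [hconst]
      rw [Finset.sum_const, Finset.card_univ, Fintype.card_eq_nat_card, Complex.card_rootsOfUnity, smul_eq_mul]
    have hgl : Nat.lcm a b * Nat.gcd a b = a * b := by
      rw [mul_comm, Nat.gcd_mul_lcm]
    intro y
    rw [hconst y]
    exact Nat.eq_of_mul_eq_mul_left (Nat.pos_of_ne_zero hl0) (by rw [hl, hgl])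
  -- main computation
  rw [Lambda, Lambda, Lambda, dif_neg ha0, dif_neg hb0, dif_neg hl0]
  rw [Finset.sum_mul_sum]
  simp_rw [MonoidAlgebra.single_mul_single, one_mul]
  have hstep : ∑ x : rootsOfUnity a ℂ, ∑ z : rootsOfUnity b ℂ,
      MonoidAlgebra.single ((x : ℂˣ) * (z : ℂˣ)) (1 : ℤ)
        = ∑ p : rootsOfUnity a ℂ × rootsOfUnity b ℂ,
            MonoidAlgebra.single (((lambdaPhi a b) p : ℂˣ)) (1 : ℤ) := by
    rw [Fintype.sum_prod_type]
    simp_rw [hphi]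
  refine hstep.trans ?_
  rw [Finset.sum_comp (fun y : rootsOfUnity (Nat.lcm a b) ℂ =>
    MonoidAlgebra.single ((y : ℂˣ)) (1 : ℤ)) (lambdaPhi a b)]
  rw [Finset.image_univ_of_surjective hsurj]
  simp_rw [hc]
  rw [Finset.smul_sum]
  refine Finset.sum_congr rfl fun y _ => ?_
  rw [Nat.cast_smul_eq_nsmul]
end

section
/- Let a_1, …, a_m be positive even integers (m ≥ 1). Then ∏_{j=1}^m (Λ_{a_j} − 1) ≡ (∑_{j=1}^m Λ_{a_j}) − 1 (mod 2) in ℤ[ℂ*]. -/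
open scoped Classical

/-- `x ≡ y (mod 2)` in the group ring `ℤ[ℂˣ]`: `x - y = 2 z` for some `z ∈ ℤ[ℂˣ]`. -/
def Mod2 (x y : MonoidAlgebra ℤ ℂˣ) : Prop :=
  ∃ z : MonoidAlgebra ℤ ℂˣ, x - y = 2 * z

noncomputable abbrev R2aux := MonoidAlgebra (ZMod 2) ℂˣ

noncomputable def phiAux : MonoidAlgebra ℤ ℂˣ →+* R2aux :=
  MonoidAlgebra.liftNCRingHom (Int.castRingHom R2aux) (MonoidAlgebra.of (ZMod 2) ℂˣ)
    (fun _ _ => Commute.all _ _)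

lemma phiAux_single (g : ℂˣ) (n : ℤ) :
    phiAux (MonoidAlgebra.single g n) = MonoidAlgebra.single g (n : ZMod 2) := by
  have h1 : phiAux (MonoidAlgebra.single g 1) = MonoidAlgebra.single g (1 : ZMod 2) := by
    simp only [phiAux, MonoidAlgebra.liftNCRingHom, RingHom.coe_mk, MonoidHom.coe_mk,
      OneHom.coe_mk, AddMonoidHom.toFun_eq_coe, MonoidAlgebra.liftNC_single,
      MonoidAlgebra.of_apply, Int.coe_castRingHom, Int.cast_one, one_mul]
    simp
  have : (MonoidAlgebra.single g n : MonoidAlgebra ℤ ℂˣ) = n • MonoidAlgebra.single g 1 := by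
    rw [MonoidAlgebra.smul_single]; simp
  rw [this, map_zsmul, h1, MonoidAlgebra.smul_single]
  simp

lemma two_zero_aux : (2 : R2aux) = 0 := by
  rw [show (2:R2aux) = 1 + 1 from by norm_num, MonoidAlgebra.one_def,
    ← MonoidAlgebra.single_add]
  simp [show (1 + 1 : ZMod 2) = 0 from rfl]

lemma phiAux_coeff (x : MonoidAlgebra ℤ ℂˣ) (g : ℂˣ) :
    (phiAux x).coeff g = ((x.coeff g : ℤ) : ZMod 2) := by
  induction x using MonoidAlgebra.induction_linear with
  | zero => simp
  | add f h hf hh =>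
    rw [map_add, MonoidAlgebra.coeff_add, MonoidAlgebra.coeff_add, Finsupp.add_apply,
      Finsupp.add_apply, hf, hh]
    push_cast; ring
  | single a b =>
    rw [phiAux_single]
    by_cases hg : a = g <;> simp [MonoidAlgebra.coeff_single, hg, Finsupp.single_apply]

lemma mod2_of_phi {x y : MonoidAlgebra ℤ ℂˣ} (h : phiAux x = phiAux y) : Mod2 x y := by
  have heven : ∀ g : ℂˣ, 2 ∣ (x - y).coeff g := by
    intro g
    have : (phiAux (x - y)).coeff g = 0 := by rw [map_sub, h, sub_self]; simp
    rw [phiAux_coeff] at this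
    exact (ZMod.intCast_zmod_eq_zero_iff_dvd _ 2).mp this
  refine ⟨MonoidAlgebra.ofCoeff ((x - y).coeff.mapRange (fun n => n / 2) (by simp)), ?_⟩
  rw [show (2 : MonoidAlgebra ℤ ℂˣ) * _ = _ + _ from two_mul _]
  apply MonoidAlgebra.coeff_injective
  ext g
  rw [MonoidAlgebra.coeff_add, Finsupp.add_apply, MonoidAlgebra.coeff_ofCoeff]
  rw [Finsupp.mapRange_apply]
  have := heven g
  omega

lemma phiAux_lambda (a : ℕ) (ha : 0 < a) [NeZero a] :
    phiAux (Lambda a) = haveI : Fintype (rootsOfUnity a ℂ) := Fintype.ofFinite _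
      ∑ ζ : rootsOfUnity a ℂ, MonoidAlgebra.single (ζ : ℂˣ) (1 : ZMod 2) := by
  rw [Lambda, dif_neg ha.ne', map_sum]
  exact Finset.sum_congr rfl fun ζ _ => by rw [phiAux_single]; norm_num

lemma lambda_mul_zero {a b : ℕ} (ha : 0 < a) (hae : Even a) (hb : 0 < b) (hbe : Even b) :
    phiAux (Lambda a) * phiAux (Lambda b) = 0 := by
  haveI : NeZero a := ⟨ha.ne'⟩
  haveI : NeZero b := ⟨hb.ne'⟩
  rw [phiAux_lambda a ha, phiAux_lambda b hb, Finset.sum_mul_sum]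
  have hnu : ∀ {c : ℕ}, Even c → ((-1 : ℂˣ) ∈ rootsOfUnity c ℂ) := by
    intro c hc
    rw [mem_rootsOfUnity]
    exact hc.neg_one_pow
  set nA : rootsOfUnity a ℂ := ⟨-1, hnu hae⟩ with hnA
  set nB : rootsOfUnity b ℂ := ⟨-1, hnu hbe⟩ with hnB
  rw [← Finset.sum_product']
  have hA2 : nA * nA = 1 := by
    apply Subtype.ext
    push_cast
    simp [hnA]
  have hB2 : nB * nB = 1 := by
    apply Subtype.ext
    push_cast
    simp [hnB]
  refine Finset.sum_ninvolution (fun p => (nA * p.1, nB * p.2)) ?_ ?_ (fun _ => Finset.mem_product.mpr ⟨by simp, by simp⟩) ?_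
  · intro p
    have hcoe : ((nA * p.1 : rootsOfUnity a ℂ) : ℂˣ) * ((nB * p.2 : rootsOfUnity b ℂ) : ℂˣ)
        = (p.1 : ℂˣ) * (p.2 : ℂˣ) := by
      push_cast
      rw [mul_mul_mul_comm]
      simp [hnA, hnB]
    simp only
    rw [MonoidAlgebra.single_mul_single, MonoidAlgebra.single_mul_single, one_mul, hcoe,
      ← MonoidAlgebra.single_add]
    simp [show (1 + 1 : ZMod 2) = 0 from rfl]
  · intro p _ hcontra
    have h0 : nA * p.1 = p.1 := congrArg Prod.fst hcontra
    have h1 : nA = 1 := mul_eq_right.mp h0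
    have h2 := congrArg (fun x : rootsOfUnity a ℂ => ((x : ℂˣ) : ℂ)) h1
    rw [hnA] at h2
    norm_num at h2
  · intro p
    simp only
    ext
    · show ((nA * (nA * p.1) : rootsOfUnity a ℂ) : ℂˣ).val = ((p.1 : ℂˣ)).val
      rw [← mul_assoc, hA2, one_mul]
    · show ((nB * (nB * p.2) : rootsOfUnity b ℂ) : ℂˣ).val = ((p.2 : ℂˣ)).val
      rw [← mul_assoc, hB2, one_mul]

/-- For positive even integers `a_1, …, a_m` with `m ≥ 1`,
`∏_{j=1}^m (Λ_{a_j} - 1) ≡ (∑_{j=1}^m Λ_{a_j}) - 1 (mod 2)` in `ℤ[ℂˣ]`. -/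
theorem prod_even_mod_two (m : ℕ) (hm : 1 ≤ m) (a : Fin m → ℕ)
    (ha : ∀ j, 0 < a j ∧ Even (a j)) :
    Mod2 (∏ j, (Lambda (a j) - 1)) ((∑ j, Lambda (a j)) - 1) := by
  set L : Fin m → R2aux := fun j => phiAux (Lambda (a j)) with hL
  have hLL : ∀ i j, L i * L j = 0 := fun i j =>
    lambda_mul_zero (ha i).1 (ha i).2 (ha j).1 (ha j).2
  have key : ∀ s : Finset (Fin m), s.Nonempty →
      ∏ j ∈ s, (L j - 1) = (∑ j ∈ s, L j) - 1 := by
    intro s hs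
    induction hs using Finset.Nonempty.cons_induction with
    | singleton j => simp
    | cons j s hj hs ih =>
      rw [Finset.prod_cons, Finset.sum_cons, ih]
      have hS : L j * (∑ i ∈ s, L i) = 0 := by
        rw [Finset.mul_sum]
        exact Finset.sum_eq_zero fun i _ => hLL j i
      linear_combination hS + (1 - L j - ∑ i ∈ s, L i) * two_zero_aux
  apply mod2_of_phi
  rw [map_prod, map_sub, map_one, map_sum]
  haveI : Nonempty (Fin m) := ⟨⟨0, hm⟩⟩
  have := key Finset.univ Finset.univ_nonempty
  simpa [map_sub, map_one] using this
end

section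
/- Let a be a positive even integer and b a positive odd integer. Then Λ_a · (Λ_b − 1) ≡ Λ_{lcm(a, b)} − Λ_a (mod 2) in ℤ[ℂ*]. -/
open scoped Classical

private lemma aux1 {G} [CommGroup G] {x y u v : G} (h : x * y = u * v) : x * u⁻¹ = v * y⁻¹ := by
  rw [← div_eq_mul_inv, ← div_eq_mul_inv, div_eq_div_iff_mul_eq_mul, h, mul_comm]

private lemma aux2 {G} [CommGroup G] {x y u v : G} (h : x * y = u * v) :
    (x * u⁻¹)⁻¹ * v = y := by
  rw [inv_mul_eq_iff_eq_mul, mul_right_comm, h, mul_right_comm, mul_inv_cancel, one_mul]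

private lemma mem_gcd_of_pows (a b : ℕ) (d : ℂˣ) (hda : d ^ a = 1) (hdb : d ^ b = 1) :
    d ^ Nat.gcd a b = 1 := by
  have h : (d ^ a) ^ Nat.gcdA a b * (d ^ b) ^ Nat.gcdB a b = d ^ (Nat.gcd a b : ℤ) := by
    rw [← zpow_natCast d a, ← zpow_natCast d b, ← zpow_mul, ← zpow_mul, ← zpow_add,
      Nat.gcd_eq_gcd_ab]
  rw [hda, hdb, one_zpow, one_zpow, mul_one] at h
  rw [← zpow_natCast, ← h]

set_option maxHeartbeats 1000000 in
private lemma key_mul (a b : ℕ) (ha : a ≠ 0) (hb : b ≠ 0) :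
    Lambda a * Lambda b = (Nat.gcd a b) • Lambda (Nat.lcm a b) := by
  haveI : NeZero a := ⟨ha⟩
  haveI : NeZero b := ⟨hb⟩
  letI : Fintype (rootsOfUnity a ℂ) := Fintype.ofFinite _
  letI : Fintype (rootsOfUnity b ℂ) := Fintype.ofFinite _
  have hl : Nat.lcm a b ≠ 0 := Nat.lcm_ne_zero ha hb
  haveI : NeZero (Nat.lcm a b) := ⟨hl⟩
  set l := Nat.lcm a b with hldef
  letI : Fintype (rootsOfUnity l ℂ) := Fintype.ofFinite _
  set g := Nat.gcd a b with hgdef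
  have hg : g ≠ 0 := Nat.gcd_ne_zero_left ha
  haveI : NeZero g := ⟨hg⟩
  letI : Fintype (rootsOfUnity g ℂ) := Fintype.ofFinite _
  have hgpos : 0 < g := Nat.pos_of_ne_zero hg
  have hbga : (b / g) * a = l := by
    apply Nat.eq_of_mul_eq_mul_left hgpos
    rw [← mul_assoc, Nat.mul_div_cancel' (Nat.gcd_dvd_right a b), Nat.gcd_mul_lcm, Nat.mul_comm]
  have hagb : (a / g) * b = l := by
    apply Nat.eq_of_mul_eq_mul_left hgpos
    rw [← mul_assoc, Nat.mul_div_cancel' (Nat.gcd_dvd_left a b), Nat.gcd_mul_lcm]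
  have hmem : ∀ (p : rootsOfUnity a ℂ × rootsOfUnity b ℂ),
      (p.1 : ℂˣ) * (p.2 : ℂˣ) ∈ rootsOfUnity l ℂ := fun p =>
    mul_mem (rootsOfUnity_le_of_dvd (Nat.dvd_lcm_left a b) p.1.2)
      (rootsOfUnity_le_of_dvd (Nat.dvd_lcm_right a b) p.2.2)
  set F : rootsOfUnity a ℂ × rootsOfUnity b ℂ → rootsOfUnity l ℂ :=
    fun p => ⟨(p.1 : ℂˣ) * (p.2 : ℂˣ), hmem p⟩ with hF
  have hsurj : Function.Surjective F := by
    intro μ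
    have hμ : (μ : ℂˣ) ^ l = 1 := by
      have := μ.2; rwa [mem_rootsOfUnity] at this
    set x := Nat.gcdA a b
    set y := Nat.gcdB a b
    have hbez : (a / g : ℕ) * x + (b / g : ℕ) * y = 1 := by
      have h1 : (g : ℤ) * ((a / g : ℕ) * x + (b / g : ℕ) * y) = (g : ℤ) * 1 := by
        rw [mul_one, mul_add, ← mul_assoc, ← mul_assoc,
          ← Nat.cast_mul, ← Nat.cast_mul,
          Nat.mul_div_cancel' (Nat.gcd_dvd_left a b),
          Nat.mul_div_cancel' (Nat.gcd_dvd_right a b)]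
        exact (Nat.gcd_eq_gcd_ab a b).symm
      exact mul_left_cancel₀ (by exact_mod_cast hg) h1
    refine ⟨(⟨(μ : ℂˣ) ^ ((b / g : ℕ) * y), ?_⟩, ⟨(μ : ℂˣ) ^ ((a / g : ℕ) * x), ?_⟩), ?_⟩
    · rw [mem_rootsOfUnity, ← zpow_natCast _ a, ← zpow_mul, mul_assoc, mul_comm (y) (a:ℤ),
        ← mul_assoc, ← Nat.cast_mul, hbga, zpow_mul, zpow_natCast, hμ, one_zpow]
    · rw [mem_rootsOfUnity, ← zpow_natCast _ b, ← zpow_mul, mul_assoc, mul_comm (x) (b:ℤ),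
        ← mul_assoc, ← Nat.cast_mul, hagb, zpow_mul, zpow_natCast, hμ, one_zpow]
    · apply Subtype.ext
      show (μ : ℂˣ) ^ ((b / g : ℕ) * y) * (μ : ℂˣ) ^ ((a / g : ℕ) * x) = (μ : ℂˣ)
      rw [← zpow_add, add_comm, hbez, zpow_one]
  have hcard : ∀ μ : rootsOfUnity l ℂ,
      (Finset.univ.filter fun p => F p = μ).card = g := by
    intro μ
    obtain ⟨p0, hp0⟩ := hsurj μ
    have hq : (p0.1 : ℂˣ) * p0.2 = (μ : ℂˣ) := congrArg Subtype.val hp0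
    have he : rootsOfUnity g ℂ ≃ {p : rootsOfUnity a ℂ × rootsOfUnity b ℂ // F p = μ} := by
      refine
        { toFun := fun ζ => ⟨(⟨(ζ : ℂˣ) * p0.1, ?_⟩, ⟨(ζ : ℂˣ)⁻¹ * p0.2, ?_⟩), ?_⟩
          invFun := fun p => ⟨(p.1.1 : ℂˣ) * (p0.1 : ℂˣ)⁻¹, ?_⟩
          left_inv := ?_
          right_inv := ?_ }
      · exact mul_mem (rootsOfUnity_le_of_dvd (Nat.gcd_dvd_left a b) ζ.2) p0.1.2
      · exact mul_mem (inv_mem (rootsOfUnity_le_of_dvd (Nat.gcd_dvd_right a b) ζ.2)) p0.2.2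
      · apply Subtype.ext
        show (ζ : ℂˣ) * p0.1 * ((ζ : ℂˣ)⁻¹ * p0.2) = (μ : ℂˣ)
        rw [mul_mul_mul_comm, mul_inv_cancel, one_mul, hq]
      · -- membership in rootsOfUnity g
        set d := (p.1.1 : ℂˣ) * (p0.1 : ℂˣ)⁻¹ with hd
        have hda : d ^ a = 1 := by
          have h1 : (p.1.1 : ℂˣ) ^ a = 1 := (mem_rootsOfUnity a _).mp p.1.1.2
          have h2 : (p0.1 : ℂˣ) ^ a = 1 := (mem_rootsOfUnity a _).mp p0.1.2
          rw [hd, mul_pow, h1, inv_pow, h2, inv_one, one_mul]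
        have hdb : d ^ b = 1 := by
          have hp : (p.1.1 : ℂˣ) * p.1.2 = (μ : ℂˣ) := congrArg Subtype.val p.2
          have hdd : d = (p0.2 : ℂˣ) * (p.1.2 : ℂˣ)⁻¹ := by
            rw [hd]; exact aux1 (hp.trans hq.symm)
          have h1 : (p.1.2 : ℂˣ) ^ b = 1 := (mem_rootsOfUnity b _).mp p.1.2.2
          have h2 : (p0.2 : ℂˣ) ^ b = 1 := (mem_rootsOfUnity b _).mp p0.2.2
          rw [hdd, mul_pow, h2, inv_pow, h1, inv_one, one_mul]
        exact (mem_rootsOfUnity g _).mpr (mem_gcd_of_pows a b d hda hdb)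
      · intro ζ
        apply Subtype.ext
        show (ζ : ℂˣ) * p0.1 * (p0.1 : ℂˣ)⁻¹ = (ζ : ℂˣ)
        rw [mul_assoc, mul_inv_cancel, mul_one]
      · intro p
        apply Subtype.ext
        apply Prod.ext
        · apply Subtype.ext
          show (p.1.1 : ℂˣ) * (p0.1 : ℂˣ)⁻¹ * p0.1 = (p.1.1 : ℂˣ)
          rw [mul_assoc, inv_mul_cancel, mul_one]
        · apply Subtype.ext
          show ((p.1.1 : ℂˣ) * (p0.1 : ℂˣ)⁻¹)⁻¹ * p0.2 = (p.1.2 : ℂˣ)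
          have hp : (p.1.1 : ℂˣ) * p.1.2 = (μ : ℂˣ) := congrArg Subtype.val p.2
          exact aux2 (hp.trans hq.symm)
    calc (Finset.univ.filter fun p => F p = μ).card
        = Fintype.card {p : rootsOfUnity a ℂ × rootsOfUnity b ℂ // F p = μ} :=
          (Fintype.card_subtype _).symm
      _ = Fintype.card (rootsOfUnity g ℂ) := (Fintype.card_congr he).symm
      _ = g := Fintype.card_eq_nat_card.trans (Complex.card_rootsOfUnity g)
  rw [Lambda, dif_neg ha, Lambda, dif_neg hb, Lambda, dif_neg hl, Finset.sum_mul_sum]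
  have hsingle : ∀ (ζ : rootsOfUnity a ℂ) (η : rootsOfUnity b ℂ),
      MonoidAlgebra.single (ζ : ℂˣ) (1:ℤ) * MonoidAlgebra.single (η : ℂˣ) (1:ℤ)
        = MonoidAlgebra.single ((F (ζ, η) : ℂˣ)) 1 := by
    intro ζ η
    rw [MonoidAlgebra.single_mul_single, one_mul]
  simp_rw [hsingle]
  rw [show (∑ x : rootsOfUnity a ℂ, ∑ y : rootsOfUnity b ℂ,
        MonoidAlgebra.single ((F (x, y) : ℂˣ)) (1:ℤ))
      = ∑ p : rootsOfUnity a ℂ × rootsOfUnity b ℂ, MonoidAlgebra.single ((F p : ℂˣ)) (1:ℤ)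
      from (Fintype.sum_prod_type (f := fun p => MonoidAlgebra.single ((F p : ℂˣ)) (1:ℤ))).symm]
  rw [← Finset.sum_fiberwise Finset.univ F
    (fun p => MonoidAlgebra.single ((F p : ℂˣ)) (1:ℤ))]
  rw [Finset.smul_sum]
  refine Finset.sum_congr (by rfl) fun μ _ => ?_
  rw [Finset.sum_congr rfl (fun p hp => by rw [(Finset.mem_filter.mp hp).2]),
    Finset.sum_const, hcard μ]

/-- For `a` a positive even integer and `b` a positive odd integer,
`Λ_a · (Λ_b - 1) ≡ Λ_{lcm(a,b)} - Λ_a (mod 2)` in `ℤ[ℂˣ]`. -/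
theorem lambda_mul_odd_sub_one_mod_two (a b : ℕ) (ha : 0 < a) (hae : Even a)
    (hb : 0 < b) (hbo : Odd b) :
    Mod2 (Lambda a * (Lambda b - 1)) (Lambda (Nat.lcm a b) - Lambda a) := by
  have hkey := key_mul a b ha.ne' hb.ne'
  have hgo : Odd (Nat.gcd a b) := by
    rw [Nat.odd_iff] at hbo ⊢
    by_contra h
    have h2 : 2 ∣ Nat.gcd a b := by omega
    have := h2.trans (Nat.gcd_dvd_right a b)
    omega
  obtain ⟨k, hk⟩ := hgo
  refine ⟨k • Lambda (Nat.lcm a b), ?_⟩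
  rw [mul_sub, mul_one, hkey, hk]
  simp only [nsmul_eq_mul]
  push_cast
  ring
end

section
/- Let E be a nonempty finite multiset of integers, each ≥ 2. The essential exponent set Ē of E is empty if and only if every element of E is even and occurs an even number of times in E; moreover, in that case ∏_{a ∈ E} (Λ_a − 1) ≡ 1 (mod 2) in ℤ[ℂ*] (the product taken with multiplicity). -/
open scoped Classical

/-- The essential exponent set of a finite multiset `E` of integers `≥ 2`:
`Ē = { a ∈ E : (a is odd, or a occurs an odd number of times in E) and
no odd b ∈ E with b ≠ a divides a }`. -/
noncomputable def essentialExponents (E : Multiset ℕ) : Finset ℕ :=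
  E.toFinset.filter fun a =>
    (Odd a ∨ Odd (E.count a)) ∧ ∀ b ∈ E, b ≠ a → Odd b → ¬ b ∣ a

lemma lambda_sq (a : ℕ) (ha : a ≠ 0) :
    Lambda a * Lambda a = (a : ℤ) • Lambda a := by
  haveI : NeZero a := ⟨ha⟩
  letI : Fintype (rootsOfUnity a ℂ) := Fintype.ofFinite _
  rw [Lambda, dif_neg ha, Finset.sum_mul_sum]
  have h1 : ∀ ζ : rootsOfUnity a ℂ,
      (∑ η : rootsOfUnity a ℂ,
        MonoidAlgebra.single (ζ : ℂˣ) (1 : ℤ) * MonoidAlgebra.single (η : ℂˣ) (1 : ℤ)) =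
      ∑ η : rootsOfUnity a ℂ, MonoidAlgebra.single (η : ℂˣ) (1 : ℤ) := by
    intro ζ
    simp_rw [MonoidAlgebra.single_mul_single, one_mul]
    exact Equiv.sum_comp (Equiv.mulLeft ζ)
      (fun η : rootsOfUnity a ℂ => MonoidAlgebra.single (η : ℂˣ) (1 : ℤ))
  calc (∑ ζ : rootsOfUnity a ℂ, ∑ η : rootsOfUnity a ℂ,
        MonoidAlgebra.single (ζ : ℂˣ) (1 : ℤ) * MonoidAlgebra.single (η : ℂˣ) (1 : ℤ))
      = ∑ _ζ : rootsOfUnity a ℂ, ∑ η : rootsOfUnity a ℂ,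
        MonoidAlgebra.single (η : ℂˣ) (1 : ℤ) := by
        exact Finset.sum_congr rfl fun ζ _ => h1 ζ
    _ = (a : ℤ) • ∑ η : rootsOfUnity a ℂ, MonoidAlgebra.single (η : ℂˣ) (1 : ℤ) := by
        rw [Finset.sum_const, Finset.card_univ, Fintype.card_eq_nat_card, Complex.card_rootsOfUnity,
          Nat.cast_smul_eq_nsmul]

lemma sq_factor_dvd (a : ℕ) (ha : a ≠ 0) (hev : Even a) :
    (2 : MonoidAlgebra ℤ ℂˣ) ∣ (Lambda a - 1) ^ 2 - 1 := by
  have h : (Lambda a - 1) ^ 2 - 1 = Lambda a * Lambda a - 2 * Lambda a := by ring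
  rw [h, lambda_sq a ha]
  obtain ⟨k, hk⟩ := hev
  refine dvd_sub ⟨(k : ℤ) • Lambda a, ?_⟩ ⟨Lambda a, rfl⟩
  rw [two_mul, ← add_smul, hk]
  push_cast
  rfl

lemma prod_one_mod_two (s : Multiset (MonoidAlgebra ℤ ℂˣ))
    (h : ∀ x ∈ s, (2 : MonoidAlgebra ℤ ℂˣ) ∣ x - 1) :
    (2 : MonoidAlgebra ℤ ℂˣ) ∣ s.prod - 1 := by
  induction s using Multiset.induction with
  | empty => simp
  | cons a s ih =>
    rw [Multiset.prod_cons]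
    have h1 : a * s.prod - 1 = a * (s.prod - 1) + (a - 1) := by ring
    rw [h1]
    exact dvd_add (Dvd.dvd.mul_left (ih fun x hx => h x (Multiset.mem_cons_of_mem hx)) a)
      (h a (Multiset.mem_cons_self a s))

/-- For a nonempty finite multiset `E` of integers `≥ 2`: the essential exponent set of `E`
is empty iff every element of `E` is even and occurs an even number of times in `E`, and in
that case `∏_{a ∈ E} (Λ_a - 1) ≡ 1 (mod 2)` in `ℤ[ℂˣ]` (product with multiplicity). -/
theorem essential_eq_empty (E : Multiset ℕ) (hE : E ≠ 0) (h2 : ∀ a ∈ E, 2 ≤ a) :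
    (essentialExponents E = ∅ ↔ ∀ a ∈ E, Even a ∧ Even (E.count a)) ∧
      (essentialExponents E = ∅ → Mod2 ((E.map fun a => Lambda a - 1).prod) 1) := by
  have hiff : essentialExponents E = ∅ ↔ ∀ a ∈ E, Even a ∧ Even (E.count a) := by
    constructor
    · intro h a haE
      have hodd : ∀ b ∈ E, ¬ Odd b := by
        by_contra hc
        push_neg at hc
        obtain ⟨b, hbE, hb⟩ := hc
        obtain ⟨m, hm, hmin⟩ :=
          (E.toFinset.filter fun x => Odd x).exists_min_image id
            ⟨b, Finset.mem_filter.mpr ⟨Multiset.mem_toFinset.mpr hbE, hb⟩⟩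
        rw [Finset.mem_filter] at hm
        have hmE : m ∈ E := Multiset.mem_toFinset.mp hm.1
        have hmm : m ∈ essentialExponents E := by
          refine Finset.mem_filter.mpr ⟨hm.1, Or.inl hm.2, ?_⟩
          intro c hcE hcm hcodd hdvd
          have hc_le : c ≤ m := Nat.le_of_dvd (by have := h2 m hmE; omega) hdvd
          have : m ≤ c := hmin c (Finset.mem_filter.mpr ⟨Multiset.mem_toFinset.mpr hcE, hcodd⟩)
          exact hcm (le_antisymm hc_le this)
        rw [h] at hmm
        exact absurd hmm (Finset.notMem_empty m)
      have hevena : Even a := Nat.not_odd_iff_even.mp (hodd a haE)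
      refine ⟨hevena, ?_⟩
      by_contra hcnt
      have hcnt' : Odd (E.count a) := Nat.not_even_iff_odd.mp hcnt
      have : a ∈ essentialExponents E := by
        refine Finset.mem_filter.mpr ⟨Multiset.mem_toFinset.mpr haE, Or.inr hcnt', ?_⟩
        intro c hcE _ hcodd _
        exact hodd c hcE hcodd
      rw [h] at this
      exact absurd this (Finset.notMem_empty a)
    · intro h
      rw [essentialExponents, Finset.filter_eq_empty_iff]
      intro a ha
      have haE : a ∈ E := Multiset.mem_toFinset.mp ha
      obtain ⟨h1, h2'⟩ := h a haE
      rintro ⟨hor, -⟩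
      rcases hor with ho | ho
      · exact (Nat.not_odd_iff_even.mpr h1) ho
      · exact (Nat.not_odd_iff_even.mpr h2') ho
  refine ⟨hiff, fun h => ?_⟩
  have hall := hiff.mp h
  rw [Mod2]
  have hdvd : (2 : MonoidAlgebra ℤ ℂˣ) ∣ (E.map fun a => Lambda a - 1).prod - 1 := by
    rw [Finset.prod_multiset_map_count]
    have : (∏ a ∈ E.toFinset, (Lambda a - 1) ^ E.count a) =
        (E.toFinset.val.map fun a => (Lambda a - 1) ^ E.count a).prod := rfl
    rw [this]
    apply prod_one_mod_two
    intro x hx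
    rw [Multiset.mem_map] at hx
    obtain ⟨a, haF, rfl⟩ := hx
    have haE : a ∈ E := Multiset.mem_toFinset.mp haF
    obtain ⟨hea, hec⟩ := hall a haE
    obtain ⟨k, hk⟩ := hec
    have ha0 : a ≠ 0 := by have := h2 a haE; omega
    have hx2 : (2 : MonoidAlgebra ℤ ℂˣ) ∣ (Lambda a - 1) ^ 2 - 1 := sq_factor_dvd a ha0 hea
    have hpow : (Lambda a - 1) ^ E.count a = ((Lambda a - 1) ^ 2) ^ k := by
      rw [← pow_mul, hk]; ring_nf
    rw [hpow]
    calc (2 : MonoidAlgebra ℤ ℂˣ) ∣ (Lambda a - 1) ^ 2 - 1 := hx2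
      _ ∣ ((Lambda a - 1) ^ 2) ^ k - 1 ^ k := sub_dvd_pow_sub_pow _ _ k
      _ = ((Lambda a - 1) ^ 2) ^ k - 1 := by rw [one_pow]
  obtain ⟨z, hz⟩ := hdvd
  exact ⟨z, by rw [hz]⟩
end

section
/- Let E be a finite multiset of integers, each ≥ 2, and let Ē be its essential exponent set. Then ∏_{a ∈ E} (Λ_a − 1) ≡ ∏_{a ∈ Ē} (Λ_a − 1) (mod 2) in ℤ[ℂ*], where the left-hand product is taken with multiplicity and the right-hand product over the set Ē (an empty product being 1). -/
open scoped Classical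

abbrev Rr := MonoidAlgebra ℤ ℂˣ

lemma Lambda_mul {b a : ℕ} (hb : b ≠ 0) (ha : a ≠ 0) (hba : b ∣ a) :
    Lambda b * Lambda a = (b : Rr) * Lambda a := by
  haveI : NeZero b := ⟨hb⟩
  haveI : NeZero a := ⟨ha⟩
  letI : Fintype (rootsOfUnity b ℂ) := Fintype.ofFinite _
  letI : Fintype (rootsOfUnity a ℂ) := Fintype.ofFinite _
  rw [Lambda, Lambda, dif_neg hb, dif_neg ha, Finset.sum_mul]
  have key : ∀ ξ : rootsOfUnity b ℂ,
      (MonoidAlgebra.single (ξ : ℂˣ) (1:ℤ)) *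
        (∑ ζ : rootsOfUnity a ℂ, MonoidAlgebra.single (ζ : ℂˣ) (1:ℤ))
        = ∑ ζ : rootsOfUnity a ℂ, MonoidAlgebra.single (ζ : ℂˣ) (1:ℤ) := by
    intro ξ
    have hξ : (ξ : ℂˣ) ∈ rootsOfUnity a ℂ := rootsOfUnity_le_of_dvd hba ξ.2
    rw [Finset.mul_sum]
    rw [← Equiv.sum_comp (Equiv.mulLeft (⟨(ξ:ℂˣ), hξ⟩ : rootsOfUnity a ℂ))
        (fun ζ : rootsOfUnity a ℂ => MonoidAlgebra.single (ζ : ℂˣ) (1:ℤ))]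
    refine Finset.sum_congr rfl fun ζ _ => ?_
    rw [MonoidAlgebra.single_mul_single, one_mul]
    rfl
  rw [Finset.sum_congr rfl (fun ξ _ => key ξ), Finset.sum_const, Finset.card_univ,
    ← Nat.card_eq_fintype_card, Complex.card_rootsOfUnity, nsmul_eq_mul]

lemma mod2_refl (x : Rr) : Mod2 x x := ⟨0, by ring⟩

lemma mod2_trans {x y w : Rr} (h : Mod2 x y) (h' : Mod2 y w) : Mod2 x w := by
  obtain ⟨z, hz⟩ := h; obtain ⟨z', hz'⟩ := h'
  exact ⟨z + z', by linear_combination hz + hz'⟩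

lemma mod2_mul {x y z w : Rr} (h : Mod2 x y) (h' : Mod2 z w) : Mod2 (x * z) (y * w) := by
  obtain ⟨u, hu⟩ := h; obtain ⟨v, hv⟩ := h'
  exact ⟨u * z + y * v, by linear_combination z * hu + y * hv⟩

lemma key_odd {b a : ℕ} (hb : b ≠ 0) (ha : a ≠ 0) (hbodd : Odd b) (hba : b ∣ a) :
    Mod2 ((Lambda b - 1) * (Lambda a - 1)) (Lambda b - 1) := by
  obtain ⟨k, rfl⟩ := hbodd
  refine ⟨(k : Rr) * Lambda a - Lambda (2 * k + 1) + 1, ?_⟩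
  have hm := Lambda_mul hb ha hba
  have hc : ((2 * k + 1 : ℕ) : Rr) = 2 * (k : Rr) + 1 := by push_cast; ring
  rw [hc] at hm
  linear_combination hm

lemma key_even {a : ℕ} (hae : Even a) (ha : a ≠ 0) :
    Mod2 ((Lambda a - 1) * (Lambda a - 1)) 1 := by
  obtain ⟨k, rfl⟩ := hae
  refine ⟨(k : Rr) * Lambda (k + k) - Lambda (k + k), ?_⟩
  have hm := Lambda_mul ha ha (dvd_refl (k + k))
  have hc : ((k + k : ℕ) : Rr) = 2 * (k : Rr) := by push_cast; ring
  rw [hc] at hm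
  linear_combination hm

lemma mod2_pow_even {x : Rr} (h : Mod2 (x * x) 1) {n : ℕ} (hn : Even n) : Mod2 (x ^ n) 1 := by
  obtain ⟨k, rfl⟩ := hn
  induction k with
  | zero => simpa using mod2_refl 1
  | succ m ih =>
    have he : x ^ (m + 1 + (m + 1)) = x ^ (m + m) * (x * x) := by ring
    rw [he]
    simpa using mod2_mul ih h

lemma mod2_pow_odd {x : Rr} (h : Mod2 (x * x) 1) {n : ℕ} (hn : Odd n) : Mod2 (x ^ n) x := by
  obtain ⟨k, rfl⟩ := hn
  have he : x ^ (2 * k + 1) = x ^ (k + k) * x := by ring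
  rw [he]
  simpa using mod2_mul (mod2_pow_even h ⟨k, rfl⟩) (mod2_refl x)

lemma mod2_pow_idem {x : Rr} (h : Mod2 (x * x) x) {n : ℕ} (hn : n ≠ 0) :
    Mod2 (x ^ n) x := by
  induction n with
  | zero => exact absurd rfl hn
  | succ m ih =>
    rcases Nat.eq_zero_or_pos m with hm | hm
    · subst hm; simpa using mod2_refl x
    · rw [pow_succ]
      exact mod2_trans (mod2_mul (ih hm.ne') (mod2_refl x)) h

lemma mod2_prod {s : Finset ℕ} {f g : ℕ → Rr} (h : ∀ a ∈ s, Mod2 (f a) (g a)) :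
    Mod2 (∏ a ∈ s, f a) (∏ a ∈ s, g a) := by
  induction s using Finset.induction with
  | empty => simpa using mod2_refl 1
  | @insert a s ha ih =>
    rw [Finset.prod_insert ha, Finset.prod_insert ha]
    exact mod2_mul (h a (Finset.mem_insert_self a s))
      (ih fun x hx => h x (Finset.mem_insert_of_mem hx))

/-- For a finite multiset `E` of integers `≥ 2`,
`∏_{a ∈ E} (Λ_a - 1) ≡ ∏_{a ∈ Ē} (Λ_a - 1) (mod 2)` in `ℤ[ℂˣ]`, where the left product is
taken with multiplicity and the right product is over the essential exponent set `Ē`. -/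
theorem prod_mod_two_essential (E : Multiset ℕ) (h2 : ∀ a ∈ E, 2 ≤ a) :
    Mod2 ((E.map fun a => Lambda a - 1).prod)
      (∏ a ∈ essentialExponents E, (Lambda a - 1)) := by
  rw [Finset.prod_multiset_map_count]
  set f : ℕ → Rr := fun a => Lambda a - 1 with hf
  set cond1 : ℕ → Prop := fun a => Odd a ∨ Odd (E.count a) with hcond1
  have stepA : Mod2 (∏ a ∈ E.toFinset, f a ^ E.count a)
      (∏ a ∈ E.toFinset.filter cond1, f a) := by
    rw [Finset.prod_filter]
    apply mod2_prod
    intro a haE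
    have ha0 : a ≠ 0 := by have := h2 a (Multiset.mem_toFinset.mp haE); omega
    have hcnt : E.count a ≠ 0 := by
      simpa [Multiset.count_eq_zero] using Multiset.mem_toFinset.mp haE
    by_cases hodd : Odd a
    · rw [if_pos (show cond1 a from Or.inl hodd)]
      exact mod2_pow_idem (key_odd ha0 ha0 hodd dvd_rfl) hcnt
    · have haeven : Even a := Nat.not_odd_iff_even.mp hodd
      have hsq := key_even haeven ha0
      by_cases hcodd : Odd (E.count a)
      · rw [if_pos (show cond1 a from Or.inr hcodd)]
        exact mod2_pow_odd hsq hcodd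
      · rw [if_neg (show ¬ cond1 a by simp only [hcond1]; tauto)]
        exact mod2_pow_even hsq (Nat.not_odd_iff_even.mp hcodd)
  have absorb : ∀ n (S : Finset ℕ), S.card = n → essentialExponents E ⊆ S →
      S ⊆ E.toFinset.filter cond1 →
      Mod2 (∏ a ∈ S, f a) (∏ a ∈ essentialExponents E, f a) := by
    intro n
    induction n using Nat.strong_induction_on with
    | _ n ih =>
      intro S hcard hE1 hE2
      by_cases hSE : S ⊆ essentialExponents E
      · rw [Finset.Subset.antisymm hSE hE1]
        exact mod2_refl _
      · obtain ⟨a, haS, haNE⟩ := Finset.not_subset.mp hSE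
        have haF := hE2 haS
        rw [Finset.mem_filter] at haF
        have ha2 : 2 ≤ a := h2 a (Multiset.mem_toFinset.mp haF.1)
        have hfail : ¬ (∀ b ∈ E, b ≠ a → Odd b → ¬ b ∣ a) := by
          intro hc
          refine haNE ?_
          simp only [essentialExponents, Finset.mem_filter]
          exact ⟨haF.1, haF.2, hc⟩
        push_neg at hfail
        obtain ⟨b0, hb0E, hb0ne, hb0odd, hb0dvd⟩ := hfail
        set D : Finset ℕ := E.toFinset.filter (fun b => Odd b ∧ b ∣ a ∧ b ≠ a) with hD
        have hDne : D.Nonempty :=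
          ⟨b0, Finset.mem_filter.mpr ⟨Multiset.mem_toFinset.mpr hb0E, hb0odd, hb0dvd, hb0ne⟩⟩
        obtain ⟨b, hbD, hbmin⟩ : ∃ b, b ∈ D ∧ ∀ c ∈ D, b ≤ c :=
          ⟨D.min' hDne, D.min'_mem hDne, fun c hc => D.min'_le c hc⟩
        rw [hD, Finset.mem_filter] at hbD
        obtain ⟨hbE, hbodd, hbdvd, hbne⟩ := hbD
        have hb2 : 2 ≤ b := h2 b (Multiset.mem_toFinset.mp hbE)
        have hblt : b < a := lt_of_le_of_ne (Nat.le_of_dvd (by omega) hbdvd) hbne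
        have hbEss : b ∈ essentialExponents E := by
          simp only [essentialExponents, Finset.mem_filter]
          refine ⟨hbE, Or.inl hbodd, fun c hcE hcne hcodd hcdvd => ?_⟩
          have hclt : c < b := lt_of_le_of_ne (Nat.le_of_dvd (by omega) hcdvd) hcne
          have hcD : c ∈ D := Finset.mem_filter.mpr
            ⟨Multiset.mem_toFinset.mpr hcE, hcodd, hcdvd.trans hbdvd,
              Nat.ne_of_lt (hclt.trans hblt)⟩
          exact absurd (hbmin c hcD) (Nat.not_le.mpr hclt)
        have hbS : b ∈ S.erase a := Finset.mem_erase.mpr ⟨hbne, hE1 hbEss⟩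
        have e1 : ∏ x ∈ S, f x = (f b * f a) * ∏ x ∈ (S.erase a).erase b, f x := by
          rw [← Finset.mul_prod_erase S f haS, ← Finset.mul_prod_erase (S.erase a) f hbS]
          ring
        have e2 : ∏ x ∈ S.erase a, f x = f b * ∏ x ∈ (S.erase a).erase b, f x :=
          (Finset.mul_prod_erase _ f hbS).symm
        have hbne0 : b ≠ 0 := by omega
        have hane0 : a ≠ 0 := by omega
        have key : Mod2 (∏ x ∈ S, f x) (∏ x ∈ S.erase a, f x) := by
          rw [e1, e2]
          exact mod2_mul (key_odd hbne0 hane0 hbodd hbdvd) (mod2_refl _)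
        refine mod2_trans key (ih ((S.erase a).card) ?_ _ rfl ?_ ?_)
        · have hpos : 0 < S.card := Finset.card_pos.mpr ⟨a, haS⟩
          rw [Finset.card_erase_of_mem haS]; omega
        · intro x hx
          exact Finset.mem_erase.mpr ⟨fun h => haNE (h ▸ hx), hE1 hx⟩
        · exact (Finset.erase_subset a S).trans hE2
  refine mod2_trans stepA (absorb _ _ rfl (fun x hx => ?_) Finset.Subset.rfl)
  simp only [essentialExponents, Finset.mem_filter] at hx
  exact Finset.mem_filter.mpr ⟨hx.1, hx.2.1⟩
end

section
/- Let E_f = {a_1, …, a_{n+1}} and E_g = {b_1, …, b_{n+1}} be multisets of integers with a_j ≥ 2 and b_j ≥ 2 for all j. Then ∏_{i=1}^{n+1} (Λ_{a_i} − 1) ≡ ∏_{i=1}^{n+1} (Λ_{b_i} − 1) (mod 2) in ℤ[ℂ*] if and only if the essential exponent sets coincide, i.e. Ē_f = Ē_g. (By Brieskorn's formula, the left-hand sides are the divisors of the Alexander polynomials of the algebraic knots of the Brieskorn polynomials z_1^{a_1} + … + z_{n+1}^{a_{n+1}} and z_1^{b_1} + … + z_{n+1}^{b_{n+1}}, so this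 congruence is exactly the Fox–Milnor type relation for these Alexander polynomials.) -/
open scoped Classical

noncomputable section

namespace FM

open scoped symmDiff

abbrev R2 := MonoidAlgebra (ZMod 2) ℂˣ

instance (a : ℕ) [NeZero a] : Fintype (rootsOfUnity a ℂ) := Fintype.ofFinite _

instance : CharP R2 2 :=
  charP_of_injective_algebraMap (R := ZMod 2) (A := R2)
    (fun x y h => by
      have := congrArg (fun f => (f : MonoidAlgebra (ZMod 2) ℂˣ).coeff 1) h
      simpa [MonoidAlgebra.coe_algebraMap, MonoidAlgebra.coeff_single, Finsupp.single_apply] using this) 2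

lemma two_eq_zero_R2 : (2 : R2) = 0 := by
  have := CharP.cast_eq_zero R2 2; exact_mod_cast this

/-- reduction mod 2 of the group ring -/
def phi : MonoidAlgebra ℤ ℂˣ →+* R2 :=
  ((MonoidAlgebra.lift ℤ R2 ℂˣ) (MonoidAlgebra.of (ZMod 2) ℂˣ)).toRingHom

lemma phi_single (g : ℂˣ) (n : ℤ) :
    phi (MonoidAlgebra.single g n) = MonoidAlgebra.single g (n : ZMod 2) := by
  simp only [phi, AlgHom.toRingHom_eq_coe, RingHom.coe_coe, MonoidAlgebra.lift_single]
  rw [MonoidAlgebra.of_apply, MonoidAlgebra.smul_single]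
  norm_num [Int.smul_one_eq_cast]

lemma phi_apply (x : MonoidAlgebra ℤ ℂˣ) (g : ℂˣ) : (phi x).coeff g = ((x.coeff g : ℤ) : ZMod 2) := by
  induction x using MonoidAlgebra.induction_linear with
  | zero => simp
  | add a b ha hb => rw [map_add, MonoidAlgebra.coeff_add, MonoidAlgebra.coeff_add, Finsupp.add_apply, Finsupp.add_apply, ha, hb]; push_cast; ring
  | single a b => rw [phi_single]; simp [MonoidAlgebra.coeff_single, Finsupp.single_apply]

lemma mod2_iff (x y : MonoidAlgebra ℤ ℂˣ) : Mod2 x y ↔ phi x = phi y := by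
  constructor
  · rintro ⟨z, hz⟩
    have h1 : phi x - phi y = 2 * phi z := by
      rw [← map_sub, hz, map_mul, map_ofNat]
    rw [two_eq_zero_R2, zero_mul, sub_eq_zero] at h1; exact h1
  · intro h
    refine ⟨MonoidAlgebra.ofCoeff (Finsupp.mapRange (fun n => n / 2) (by norm_num) (x - y).coeff), ?_⟩
    ext g
    have hg : ((x.coeff g : ℤ) : ZMod 2) = ((y.coeff g : ℤ) : ZMod 2) := by
      rw [← phi_apply, ← phi_apply, h]
    have hdvd : (2 : ℤ) ∣ (x - y).coeff g := by
      rw [MonoidAlgebra.coeff_sub, Finsupp.sub_apply]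
      have := ((ZMod.intCast_eq_intCast_iff _ _ _).mp hg).dvd
      omega
    have h2 : (2 : MonoidAlgebra ℤ ℂˣ) = MonoidAlgebra.single 1 2 := by
      have h1 : (2 : MonoidAlgebra ℤ ℂˣ) = 1 + 1 := by norm_num
      rw [h1, MonoidAlgebra.one_def, ← MonoidAlgebra.single_add]; norm_num
    rw [h2, MonoidAlgebra.coeff_single_one_mul, Finsupp.mapRange_apply]
    rw [MonoidAlgebra.coeff_sub, Finsupp.sub_apply] at hdvd ⊢
    omega

def L (a : ℕ) : R2 :=
  if h : a = 0 then 0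
  else
    haveI : NeZero a := ⟨h⟩
    haveI : Fintype (rootsOfUnity a ℂ) := Fintype.ofFinite _
    ∑ ζ : rootsOfUnity a ℂ, MonoidAlgebra.single (ζ : ℂˣ) (1 : ZMod 2)

lemma L_of_ne (a : ℕ) [NeZero a] :
    L a = ∑ ζ : rootsOfUnity a ℂ, MonoidAlgebra.single (ζ : ℂˣ) (1 : ZMod 2) := by
  rw [L, dif_neg (NeZero.ne a)]

lemma phi_Lambda (a : ℕ) : phi (Lambda a) = L a := by
  unfold Lambda L
  split
  · simp
  · rw [map_sum]
    exact Finset.sum_congr rfl fun ζ _ => phi_single _ _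

lemma L_one : L 1 = 1 := by
  rw [L_of_ne]
  rw [show (1 : R2) = MonoidAlgebra.single ((1 : rootsOfUnity 1 ℂ) : ℂˣ) (1 : ZMod 2) from rfl]
  apply Fintype.sum_eq_single
  intro ζ hζ
  exact absurd (Subtype.ext (by simpa [mem_rootsOfUnity] using ζ.2)) hζ

section LmulSec

variable {a b : ℕ}

lemma fiber_card [NeZero a] [NeZero b] (η : rootsOfUnity (Nat.lcm a b) ℂ) :
    (Finset.univ.filter (fun p : rootsOfUnity a ℂ × rootsOfUnity b ℂ =>
      (p.1 : ℂˣ) * (p.2 : ℂˣ) = (η : ℂˣ))).card = Nat.gcd a b := by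
  have ha := NeZero.ne a
  have hb := NeZero.ne b
  haveI : NeZero (Nat.gcd a b) := ⟨Nat.gcd_ne_zero_left ha⟩
  set g := Nat.gcd a b with hg
  set a' := a / g with ha'
  set b' := b / g with hb'
  have hga : g * a' = a := Nat.mul_div_cancel' (Nat.gcd_dvd_left a b)
  have hgb : g * b' = b := Nat.mul_div_cancel' (Nat.gcd_dvd_right a b)
  have hgpos : g ≠ 0 := NeZero.ne g
  have hlcm1 : b' * a = Nat.lcm a b := by
    apply Nat.eq_of_mul_eq_mul_left (Nat.pos_of_ne_zero hgpos)
    rw [← mul_assoc, hgb, mul_comm b a, Nat.gcd_mul_lcm]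
  have hlcm2 : a' * b = Nat.lcm a b := by
    apply Nat.eq_of_mul_eq_mul_left (Nat.pos_of_ne_zero hgpos)
    rw [← mul_assoc, hga, Nat.gcd_mul_lcm]
  obtain ⟨u, v, huv⟩ : IsCoprime (a' : ℤ) (b' : ℤ) := by
    rw [Nat.isCoprime_iff_coprime]
    exact Nat.coprime_div_gcd_div_gcd (Nat.pos_of_ne_zero hgpos)
  have hη : (η : ℂˣ) ^ Nat.lcm a b = 1 := (mem_rootsOfUnity _ _).mp η.2
  set ζ₀ : ℂˣ := (η : ℂˣ) ^ (v * (b' : ℤ)) with hζ₀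
  set ξ₀ : ℂˣ := (η : ℂˣ) ^ (u * (a' : ℤ)) with hξ₀
  have hζ₀a : ζ₀ ^ a = 1 := by
    rw [hζ₀, ← zpow_natCast ((η:ℂˣ) ^ (v * (b':ℤ))) a, ← zpow_mul]
    have he : (v * (b':ℤ)) * (a:ℤ) = (Nat.lcm a b : ℤ) * v := by
      push_cast [← hlcm1]; ring
    rw [he, zpow_mul, zpow_natCast, hη, one_zpow]
  have hξ₀b : ξ₀ ^ b = 1 := by
    rw [hξ₀, ← zpow_natCast ((η:ℂˣ) ^ (u * (a':ℤ))) b, ← zpow_mul]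
    have he : (u * (a':ℤ)) * (b:ℤ) = (Nat.lcm a b : ℤ) * u := by
      push_cast [← hlcm2]; ring
    rw [he, zpow_mul, zpow_natCast, hη, one_zpow]
  have hprod : ζ₀ * ξ₀ = (η : ℂˣ) := by
    rw [hζ₀, hξ₀, ← zpow_add, ← zpow_one (η : ℂˣ)]
    congr 1
    rw [zpow_one]
    push_cast
    linarith [huv]
  have hpow1 : ∀ ζ : rootsOfUnity a ℂ, (ζ : ℂˣ) ^ a = 1 :=
    fun ζ => (mem_rootsOfUnity _ _).mp ζ.2
  have hpow2 : ∀ ξ : rootsOfUnity b ℂ, (ξ : ℂˣ) ^ b = 1 :=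
    fun ξ => (mem_rootsOfUnity _ _).mp ξ.2
  have hpowg : ∀ c : rootsOfUnity g ℂ, (c : ℂˣ) ^ g = 1 :=
    fun c => (mem_rootsOfUnity _ _).mp c.2
  have imem : ∀ p : rootsOfUnity a ℂ × rootsOfUnity b ℂ,
      (p.1 : ℂˣ) * (p.2 : ℂˣ) = (η : ℂˣ) → ζ₀⁻¹ * (p.1 : ℂˣ) ∈ rootsOfUnity g ℂ := by
    intro p hp
    rw [mem_rootsOfUnity]
    have hca : (ζ₀⁻¹ * (p.1 : ℂˣ)) ^ a = 1 := by
      rw [mul_pow, inv_pow, hζ₀a, hpow1, inv_one, one_mul]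
    have hkey : ζ₀⁻¹ * (p.1 : ℂˣ) = ξ₀ * ((p.2 : ℂˣ))⁻¹ := by
      calc ζ₀⁻¹ * (p.1 : ℂˣ) = ζ₀⁻¹ * ((p.1 : ℂˣ) * (p.2 : ℂˣ)) * ((p.2:ℂˣ))⁻¹ := by group
      _ = ζ₀⁻¹ * (ζ₀ * ξ₀) * ((p.2:ℂˣ))⁻¹ := by rw [hp, hprod]
      _ = ξ₀ * ((p.2 : ℂˣ))⁻¹ := by group
    have hcb : (ζ₀⁻¹ * (p.1 : ℂˣ)) ^ b = 1 := by
      rw [hkey, mul_pow, inv_pow, hξ₀b, hpow2, inv_one, mul_one]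
    exact pow_gcd_eq_one.mpr ⟨hca, hcb⟩
  have jmem1 : ∀ c : rootsOfUnity g ℂ, ζ₀ * (c : ℂˣ) ∈ rootsOfUnity a ℂ := by
    intro c
    rw [mem_rootsOfUnity, mul_pow, hζ₀a, one_mul, ← hga, pow_mul, hpowg, one_pow]
  have jmem2 : ∀ c : rootsOfUnity g ℂ, ((c : ℂˣ))⁻¹ * ξ₀ ∈ rootsOfUnity b ℂ := by
    intro c
    rw [mem_rootsOfUnity, mul_pow, hξ₀b, mul_one, inv_pow, ← hgb, pow_mul, hpowg, one_pow, inv_one]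
  rw [show g = Fintype.card (rootsOfUnity g ℂ) from (Nat.card_eq_fintype_card.symm.trans (Complex.card_rootsOfUnity g)).symm,
    ← Finset.card_univ]
  refine Finset.card_bij'
    (fun p hp => (⟨ζ₀⁻¹ * (p.1 : ℂˣ),
      imem p (by simpa using hp)⟩ : rootsOfUnity g ℂ))
    (fun c _ => ((⟨ζ₀ * (c : ℂˣ), jmem1 c⟩, ⟨((c : ℂˣ))⁻¹ * ξ₀, jmem2 c⟩) :
      rootsOfUnity a ℂ × rootsOfUnity b ℂ)) ?_ ?_ ?_ ?_
  · intro p hp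
    exact Finset.mem_univ _
  · intro c hc
    simp only [Finset.mem_filter, Finset.mem_univ, true_and]
    calc ζ₀ * (c:ℂˣ) * (((c:ℂˣ))⁻¹ * ξ₀) = ζ₀ * ξ₀ := by group
    _ = (η : ℂˣ) := hprod
  · intro p hp
    simp only [Finset.mem_filter, Finset.mem_univ, true_and] at hp
    have h1 : ζ₀ * (ζ₀⁻¹ * (p.1 : ℂˣ)) = (p.1 : ℂˣ) := by group
    have h2 : (ζ₀⁻¹ * (p.1 : ℂˣ))⁻¹ * ξ₀ = (p.2 : ℂˣ) := by
      calc (ζ₀⁻¹ * (p.1:ℂˣ))⁻¹ * ξ₀ = ((p.1:ℂˣ))⁻¹ * (ζ₀ * ξ₀) := by group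
      _ = ((p.1:ℂˣ))⁻¹ * ((p.1:ℂˣ) * (p.2:ℂˣ)) := by rw [hprod, hp]
      _ = (p.2 : ℂˣ) := by group
    exact Prod.ext (Subtype.ext h1) (Subtype.ext h2)
  · intro c hc
    exact Subtype.ext (by show ζ₀⁻¹ * (ζ₀ * (c : ℂˣ)) = (c : ℂˣ); group)

end LmulSec

lemma L_mul (a b : ℕ) [NeZero a] [NeZero b] :
    L a * L b = ((Nat.gcd a b : ZMod 2)) • L (Nat.lcm a b) := by
  haveI : NeZero (Nat.lcm a b) := ⟨Nat.lcm_ne_zero (NeZero.ne a) (NeZero.ne b)⟩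
  rw [L_of_ne, L_of_ne, L_of_ne, Finset.sum_mul_sum]
  simp only [MonoidAlgebra.single_mul_single, one_mul]
  rw [← Fintype.sum_prod_type (f := fun p : rootsOfUnity a ℂ × rootsOfUnity b ℂ =>
    MonoidAlgebra.single ((p.1 : ℂˣ) * (p.2 : ℂˣ)) (1 : ZMod 2))]
  have hπ : ∀ p : rootsOfUnity a ℂ × rootsOfUnity b ℂ,
      (p.1 : ℂˣ) * (p.2 : ℂˣ) ∈ rootsOfUnity (Nat.lcm a b) ℂ := by
    intro p
    rw [mem_rootsOfUnity, mul_pow]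
    have h1 : ((p.1 : ℂˣ)) ^ Nat.lcm a b = 1 := by
      obtain ⟨k, hk⟩ := Nat.dvd_lcm_left a b
      rw [hk, pow_mul, (mem_rootsOfUnity _ _).mp p.1.2, one_pow]
    have h2 : ((p.2 : ℂˣ)) ^ Nat.lcm a b = 1 := by
      obtain ⟨k, hk⟩ := Nat.dvd_lcm_right a b
      rw [hk, pow_mul, (mem_rootsOfUnity _ _).mp p.2.2, one_pow]
    rw [h1, h2, one_mul]
  set π : rootsOfUnity a ℂ × rootsOfUnity b ℂ → rootsOfUnity (Nat.lcm a b) ℂ :=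
    fun p => ⟨(p.1 : ℂˣ) * (p.2 : ℂˣ), hπ p⟩ with hπdef
  rw [← Finset.sum_fiberwise_of_maps_to (g := π) (t := Finset.univ)
    (fun x _ => Finset.mem_univ _)
    (fun p : rootsOfUnity a ℂ × rootsOfUnity b ℂ =>
      MonoidAlgebra.single ((p.1 : ℂˣ) * (p.2 : ℂˣ)) (1 : ZMod 2))]
  rw [Finset.smul_sum]
  refine Finset.sum_congr rfl fun η _ => ?_
  have hcongr : ∀ p ∈ Finset.univ.filter (fun p => π p = η),
      MonoidAlgebra.single ((p.1 : ℂˣ) * (p.2 : ℂˣ)) (1 : ZMod 2)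
        = MonoidAlgebra.single ((η : ℂˣ)) (1 : ZMod 2) := by
    intro p hp
    simp only [Finset.mem_filter] at hp
    rw [show (p.1 : ℂˣ) * (p.2 : ℂˣ) = ((π p : rootsOfUnity (Nat.lcm a b) ℂ) : ℂˣ) from rfl,
      hp.2]
  rw [Finset.sum_congr rfl hcongr, Finset.sum_const]
  have hfil : Finset.univ.filter (fun p => π p = η)
      = Finset.univ.filter (fun p : rootsOfUnity a ℂ × rootsOfUnity b ℂ =>
        (p.1 : ℂˣ) * (p.2 : ℂˣ) = (η : ℂˣ)) := by
    apply Finset.filter_congr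
    intro p _
    simp only [hπdef, Subtype.ext_iff, eq_iff_iff]
  rw [hfil, fiber_card, ← Nat.cast_smul_eq_nsmul (ZMod 2)]

lemma odd_cast {n : ℕ} (h : Odd n) : (n : ZMod 2) = 1 := by
  obtain ⟨k, rfl⟩ := h
  push_cast
  rw [show (2 : ZMod 2) = 0 by decide]
  ring

lemma even_cast {n : ℕ} (h : Even n) : (n : ZMod 2) = 0 := by
  obtain ⟨k, rfl⟩ := h
  push_cast
  rw [show ((k : ZMod 2) + k) = 2 * k by ring, show (2 : ZMod 2) = 0 by decide]
  ring

lemma L_sq (a : ℕ) [NeZero a] : L a * L a = ((a : ZMod 2)) • L a := by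
  rw [L_mul, Nat.gcd_self, Nat.lcm_self]

lemma sq_even (a : ℕ) [NeZero a] (h : Even a) : (L a - 1) ^ 2 = 1 := by
  have h1 : (L a - 1) ^ 2 = L a * L a - 2 * L a + 1 := by ring
  rw [h1, L_sq, even_cast h, zero_smul, two_eq_zero_R2]
  ring

lemma sq_odd (a : ℕ) [NeZero a] (h : Odd a) : (L a - 1) ^ 2 = L a - 1 := by
  have h1 : (L a - 1) ^ 2 = L a * L a - 2 * L a + 1 := by ring
  rw [h1, L_sq, odd_cast h, one_smul, two_eq_zero_R2]
  ring_nf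
  rw [CharTwo.neg_eq]

lemma absorb (a b : ℕ) [NeZero a] [NeZero b] (hba : b ∣ a) (hb : Odd b) :
    (L a - 1) * (L b - 1) = L b - 1 := by
  have hg : Nat.gcd a b = b := by rw [Nat.gcd_comm]; exact Nat.gcd_eq_left hba
  have hl : Nat.lcm a b = a := Nat.dvd_antisymm (Nat.lcm_dvd dvd_rfl hba) (Nat.dvd_lcm_left a b)
  have hmul : L a * L b = L a := by rw [L_mul, hg, hl, odd_cast hb, one_smul]
  have h1 : (L a - 1) * (L b - 1) = L a * L b - L a - L b + 1 := by ring
  rw [h1, hmul]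
  have : (1 : R2) - L b = L b - 1 := by
    rw [CharTwo.sub_eq_add, CharTwo.sub_eq_add, add_comm]
  rw [← this]
  ring

/-- product over a multiset of exponents -/
def Pm (E : Multiset ℕ) : R2 := (E.map fun a => L a - 1).prod

lemma Pm_cons (a : ℕ) (E : Multiset ℕ) : Pm (a ::ₘ E) = (L a - 1) * Pm E := by
  rw [Pm, Multiset.map_cons, Multiset.prod_cons]; rfl

lemma ess_even_dup {a : ℕ} (ha : Even a) (E : Multiset ℕ) :
    essentialExponents (a ::ₘ a ::ₘ E) = essentialExponents E := by
  have hnotodd : ¬ Odd a := by rwa [Nat.not_odd_iff_even]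
  ext x
  simp only [essentialExponents, Finset.mem_filter, Multiset.mem_toFinset, Multiset.mem_cons]
  by_cases hxa : x = a
  · subst hxa
    constructor
    · rintro ⟨-, hodd, hdiv⟩
      rw [Multiset.count_cons_self, Multiset.count_cons_self] at hodd
      have hcount : Odd (Multiset.count x E) := by
        rcases hodd with h | h
        · exact absurd h hnotodd
        · rw [Nat.odd_iff] at h ⊢; omega
      have hmem : x ∈ E := by
        rw [← Multiset.count_pos]
        rw [Nat.odd_iff] at hcount; omega
      exact ⟨hmem, Or.inr hcount, fun b hb hne hbo => hdiv b (Or.inr (Or.inr hb)) hne hbo⟩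
    · rintro ⟨hmem, hodd, hdiv⟩
      refine ⟨Or.inl rfl, ?_, ?_⟩
      · right
        rw [Multiset.count_cons_self, Multiset.count_cons_self]
        have : Odd (Multiset.count x E) := by
          rcases hodd with h | h
          · exact absurd h hnotodd
          · exact h
        rw [Nat.odd_iff] at this ⊢; omega
      · rintro b (rfl | rfl | hb) hne hbo
        · exact absurd rfl hne
        · exact absurd rfl hne
        · exact hdiv b hb hne hbo
  · constructor
    · rintro ⟨hmem, hodd, hdiv⟩
      have hmem' : x ∈ E := by
        rcases hmem with rfl | rfl | h
        · exact absurd rfl hxa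
        · exact absurd rfl hxa
        · exact h
      refine ⟨hmem', ?_, fun b hb => hdiv b (Or.inr (Or.inr hb))⟩
      rwa [Multiset.count_cons_of_ne hxa, Multiset.count_cons_of_ne hxa] at hodd
    · rintro ⟨hmem, hodd, hdiv⟩
      refine ⟨Or.inr (Or.inr hmem), ?_, ?_⟩
      · rwa [Multiset.count_cons_of_ne hxa, Multiset.count_cons_of_ne hxa]
      · rintro b (rfl | rfl | hb) hne hbo
        · exact absurd hbo hnotodd
        · exact absurd hbo hnotodd
        · exact hdiv b hb hne hbo

lemma ess_odd_dup {a : ℕ} (ha : Odd a) (E : Multiset ℕ) :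
    essentialExponents (a ::ₘ a ::ₘ E) = essentialExponents (a ::ₘ E) := by
  ext x
  simp only [essentialExponents, Finset.mem_filter, Multiset.mem_toFinset, Multiset.mem_cons]
  by_cases hxa : x = a
  · subst hxa
    constructor
    · rintro ⟨-, -, hdiv⟩
      refine ⟨Or.inl rfl, Or.inl ha, ?_⟩
      rintro b (rfl | hb) hne hbo
      · exact absurd rfl hne
      · exact hdiv b (Or.inr (Or.inr hb)) hne hbo
    · rintro ⟨-, -, hdiv⟩
      refine ⟨Or.inl rfl, Or.inl ha, ?_⟩
      rintro b (rfl | rfl | hb) hne hbo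
      · exact absurd rfl hne
      · exact absurd rfl hne
      · exact hdiv b (Or.inr hb) hne hbo
  · constructor
    · rintro ⟨hmem, hodd, hdiv⟩
      have hmem' : x ∈ E := by
        rcases hmem with rfl | rfl | h
        · exact absurd rfl hxa
        · exact absurd rfl hxa
        · exact h
      refine ⟨Or.inr hmem', ?_, ?_⟩
      · rw [Multiset.count_cons_of_ne hxa]
        rwa [Multiset.count_cons_of_ne hxa, Multiset.count_cons_of_ne hxa] at hodd
      · rintro b (rfl | hb) hne hbo
        · exact hdiv b (Or.inl rfl) hne hbo
        · exact hdiv b (Or.inr (Or.inr hb)) hne hbo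
    · rintro ⟨hmem, hodd, hdiv⟩
      have hmem' : x ∈ E := by
        rcases hmem with rfl | h
        · exact absurd rfl hxa
        · exact h
      refine ⟨Or.inr (Or.inr hmem'), ?_, ?_⟩
      · rw [Multiset.count_cons_of_ne hxa, Multiset.count_cons_of_ne hxa]
        rwa [Multiset.count_cons_of_ne hxa] at hodd
      · rintro b (rfl | rfl | hb) hne hbo
        · exact hdiv b (Or.inl rfl) hne hbo
        · exact hdiv b (Or.inl rfl) hne hbo
        · exact hdiv b (Or.inr hb) hne hbo

lemma ess_absorb {a b : ℕ} (E : Multiset ℕ) (hnd : a ∉ E) (hbE : b ∈ E) (hbo : Odd b)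
    (hdvd : b ∣ a) (hne : b ≠ a) :
    essentialExponents (a ::ₘ E) = essentialExponents E := by
  ext x
  simp only [essentialExponents, Finset.mem_filter, Multiset.mem_toFinset, Multiset.mem_cons]
  by_cases hxa : x = a
  · subst hxa
    constructor
    · rintro ⟨-, -, hdiv⟩
      exact absurd hdvd (hdiv b (Or.inr hbE) hne hbo)
    · rintro ⟨hmem, -, -⟩
      exact absurd hmem hnd
  · constructor
    · rintro ⟨hmem, hodd, hdiv⟩
      have hx : x ∈ E := by
        rcases hmem with rfl | h
        · exact absurd rfl hxa
        · exact h
      refine ⟨hx, ?_, fun b' hb' => hdiv b' (Or.inr hb')⟩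
      rwa [Multiset.count_cons_of_ne hxa] at hodd
    · rintro ⟨hmem, hodd, hdiv⟩
      refine ⟨Or.inr hmem, by rwa [Multiset.count_cons_of_ne hxa], ?_⟩
      rintro b' (rfl | hb') hne' hbo'
      · intro hax
        have hbx : b ∣ x := hdvd.trans hax
        have hbnex : b ≠ x := by
          rintro rfl
          exact hne (Nat.dvd_antisymm hdvd hax)
        exact hdiv b hbE hbnex hbo hbx
      · exact hdiv b' hb' hne' hbo'

lemma ess_of_reduced (E : Multiset ℕ) (hnd : E.Nodup)
    (hdiv : ∀ a ∈ E, ∀ b ∈ E, b ≠ a → Odd b → ¬ b ∣ a) :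
    essentialExponents E = E.toFinset := by
  rw [essentialExponents, Finset.filter_true_of_mem]
  intro x hx
  rw [Multiset.mem_toFinset] at hx
  exact ⟨Or.inr (by rw [Multiset.count_eq_one_of_mem hnd hx]; exact odd_one),
    fun b hb hne hbo => hdiv x hx b hb hne hbo⟩

lemma Pm_eq_essential (E : Multiset ℕ) : (∀ a ∈ E, 2 ≤ a) →
    Pm E = ∏ x ∈ essentialExponents E, (L x - 1) := by
  induction E using Multiset.strongInductionOn with
  | ih E IH =>
    intro hE
    have hNZ : ∀ a ∈ E, a ≠ 0 := fun a ha => by have := hE a ha; omega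
    by_cases h1 : ∃ a ∈ E, 2 ≤ E.count a
    · obtain ⟨a, haE, hc⟩ := h1
      haveI : NeZero a := ⟨hNZ a haE⟩
      have hle : Multiset.replicate 2 a ≤ E := Multiset.le_count_iff_replicate_le.mp hc
      obtain ⟨E', hE'⟩ := Multiset.le_iff_exists_add.mp hle
      have hEeq : E = a ::ₘ a ::ₘ E' := by
        rw [hE']
        simp [Multiset.replicate_succ, Multiset.cons_add]
      have hE'le : ∀ x ∈ E', 2 ≤ x := fun x hx => hE x (by
        rw [hEeq]; exact Multiset.mem_cons_of_mem (Multiset.mem_cons_of_mem hx))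
      have hlt : E' < E := by
        rw [hEeq]
        exact lt_trans (Multiset.lt_cons_self E' a) (Multiset.lt_cons_self (a ::ₘ E') a)
      by_cases hpar : Even a
      · have hP : Pm E = Pm E' := by
          rw [hEeq, Pm_cons, Pm_cons, ← mul_assoc, ← sq, sq_even a hpar, one_mul]
        rw [hP, hEeq, ess_even_dup hpar E']
        exact IH E' hlt hE'le
      · have hodd : Odd a := Nat.not_even_iff_odd.mp hpar
        have hP : Pm E = Pm (a ::ₘ E') := by
          rw [hEeq, Pm_cons, Pm_cons, ← mul_assoc, ← sq, sq_odd a hodd, ← Pm_cons]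
        have hlt2 : a ::ₘ E' < E := by rw [hEeq]; exact Multiset.lt_cons_self _ a
        rw [hP, hEeq, ess_odd_dup hodd E']
        exact IH (a ::ₘ E') hlt2 (fun x hx => hE x (by
          rw [hEeq]
          rcases Multiset.mem_cons.mp hx with rfl | h
          · exact Multiset.mem_cons_self _ _
          · exact Multiset.mem_cons_of_mem (Multiset.mem_cons_of_mem h)))
    · push_neg at h1
      have hnd : E.Nodup := Multiset.nodup_iff_count_le_one.mpr (fun x => by
        by_cases hx : x ∈ E
        · have := h1 x hx; omega
        · rw [Multiset.count_eq_zero_of_notMem hx]; omega)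
      by_cases h2 : ∃ a ∈ E, ∃ b ∈ E, b ≠ a ∧ Odd b ∧ b ∣ a
      · obtain ⟨a, haE, b, hbE, hne, hbo, hdvd⟩ := h2
        haveI : NeZero a := ⟨hNZ a haE⟩
        haveI : NeZero b := ⟨hNZ b hbE⟩
        obtain ⟨E', rfl⟩ := Multiset.exists_cons_of_mem haE
        have haE' : a ∉ E' := (Multiset.nodup_cons.mp hnd).1
        have hbE' : b ∈ E' := by
          rcases Multiset.mem_cons.mp hbE with h | h
          · exact absurd h hne
          · exact h
        have hP : Pm (a ::ₘ E') = Pm E' := by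
          obtain ⟨E'', rfl⟩ := Multiset.exists_cons_of_mem hbE'
          rw [Pm_cons, Pm_cons, ← mul_assoc, absorb a b hdvd hbo, ← Pm_cons]
        rw [hP, ess_absorb E' haE' hbE' hbo hdvd hne]
        exact IH E' (Multiset.lt_cons_self E' a)
          (fun x hx => hE x (Multiset.mem_cons_of_mem hx))
      · push_neg at h2
        have hdiv : ∀ a ∈ E, ∀ b ∈ E, b ≠ a → Odd b → ¬ b ∣ a :=
          fun a ha b hb hne hbo => h2 a ha b hb hne hbo
        rw [ess_of_reduced E hnd hdiv, Pm, Finset.prod_eq_multiset_prod]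
        congr 1
        rw [Multiset.toFinset_val, Multiset.dedup_eq_self.mpr hnd]

lemma finset_lcm_ne_zero {T : Finset ℕ} (hT : ∀ t ∈ T, t ≠ 0) : T.lcm id ≠ 0 := by
  induction T using Finset.induction_on with
  | empty => simp
  | @insert a T ha IH =>
    rw [Finset.lcm_insert]
    intro h
    rcases (lcm_eq_zero_iff _ _).mp h with h | h
    · exact hT a (Finset.mem_insert_self a T) h
    · exact IH (fun t ht => hT t (Finset.mem_insert_of_mem ht)) h

lemma L_apply (N : ℕ) [NeZero N] (ζ : ℂˣ) :
    (L N).coeff ζ = if ζ ^ N = 1 then 1 else 0 := by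
  rw [L_of_ne, MonoidAlgebra.coeff_sum, Finset.sum_apply']
  simp only [MonoidAlgebra.coeff_single]
  by_cases h : ζ ^ N = 1
  · rw [if_pos h]
    rw [Finset.sum_eq_single (⟨ζ, (mem_rootsOfUnity _ _).mpr h⟩ : rootsOfUnity N ℂ)]
    · rw [Finsupp.single_apply, if_pos rfl]
    · intro ξ _ hne
      rw [Finsupp.single_apply, if_neg]
      intro hc
      exact hne (Subtype.ext hc)
    · intro habs
      exact absurd (Finset.mem_univ _) habs
  · rw [if_neg h, Finset.sum_eq_zero]
    intro ξ _
    rw [Finsupp.single_apply, if_neg]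
    intro hc
    exact h (hc ▸ (mem_rootsOfUnity _ _).mp ξ.2)

lemma exists_prim (d : ℕ) (hd : d ≠ 0) : ∃ ζ : ℂˣ, ∀ N : ℕ, (ζ ^ N = 1 ↔ d ∣ N) := by
  have h := Complex.isPrimitiveRoot_exp d hd
  obtain ⟨ζ, hζ⟩ := h.isUnit hd
  have hζp : IsPrimitiveRoot ζ d := by rwa [← IsPrimitiveRoot.coe_units_iff, hζ]
  exact ⟨ζ, fun N => hζp.pow_eq_one_iff_dvd N⟩

lemma odd_of_dvd_odd {t m : ℕ} (h : t ∣ m) (hm : Odd m) : Odd t := by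
  rcases Nat.even_or_odd t with he | ho
  · exfalso
    have h2 : 2 ∣ m := dvd_trans he.two_dvd h
    rw [Nat.odd_iff] at hm
    omega
  · exact ho

lemma prod_L (T : Finset ℕ) (hT : ∀ t ∈ T, t ≠ 0) :
    ∏ t ∈ T, L t = (((∏ t ∈ T, t) / T.lcm id : ℕ) : ZMod 2) • L (T.lcm id) := by
  induction T using Finset.induction_on with
  | empty => simp [L_one]
  | @insert a T ha IH =>
    have haz : a ≠ 0 := hT a (Finset.mem_insert_self a T)
    have hTz : ∀ t ∈ T, t ≠ 0 := fun t ht => hT t (Finset.mem_insert_of_mem ht)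
    haveI : NeZero a := ⟨haz⟩
    haveI : NeZero (T.lcm id) := ⟨finset_lcm_ne_zero hTz⟩
    have hLpos : 0 < T.lcm id := Nat.pos_of_ne_zero (finset_lcm_ne_zero hTz)
    have hlcm_dvd_prod : T.lcm id ∣ ∏ t ∈ T, t :=
      Finset.lcm_dvd (fun b hb => Finset.dvd_prod_of_mem id hb)
    obtain ⟨q, hq⟩ := hlcm_dvd_prod
    have hlcm_cons : (insert a T).lcm id = Nat.lcm a (T.lcm id) := by
      rw [Finset.lcm_insert, lcm_eq_nat_lcm]; rfl
    have hlcmpos : 0 < Nat.lcm a (T.lcm id) :=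
      Nat.pos_of_ne_zero (Nat.lcm_ne_zero haz (finset_lcm_ne_zero hTz))
    have harith : (∏ t ∈ insert a T, t) / (insert a T).lcm id
        = Nat.gcd a (T.lcm id) * ((∏ t ∈ T, t) / T.lcm id) := by
      rw [Finset.prod_insert ha, hlcm_cons, hq, Nat.mul_div_cancel_left q hLpos]
      have h1 : a * (T.lcm id * q) = Nat.lcm a (T.lcm id) * (Nat.gcd a (T.lcm id) * q) := by
        rw [show Nat.lcm a (T.lcm id) * (Nat.gcd a (T.lcm id) * q)
          = (Nat.gcd a (T.lcm id) * Nat.lcm a (T.lcm id)) * q by ring, Nat.gcd_mul_lcm]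
        ring
      rw [h1, Nat.mul_div_cancel_left _ hlcmpos]
    rw [Finset.prod_insert ha, IH hTz, harith, hlcm_cons]
    rw [mul_smul_comm, L_mul, Nat.cast_mul, smul_smul, mul_comm]

/-- the mod 2 coefficient of a subset -/
def cw (T : Finset ℕ) : ZMod 2 := (((∏ t ∈ T, t) / T.lcm id : ℕ) : ZMod 2)

/-- canonical form index set -/
def essSet (A : Finset ℕ) : Finset ℕ :=
  (A.powerset.image (fun T => T.lcm id)).filter
    (fun N => (∑ T ∈ A.powerset.filter (fun T => T.lcm id = N), cw T) = 1)

lemma zmod2_cases (x : ZMod 2) : x = 0 ∨ x = 1 := by revert x; decide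

lemma group_sum {ι : Type*} [DecidableEq ι] (I : Finset ι) (v : ι → ℕ) (w : ι → ZMod 2) :
    ∑ i ∈ I, w i • L (v i)
      = ∑ N ∈ (I.image v).filter
          (fun N => (∑ i ∈ I.filter (fun i => v i = N), w i) = 1), L N := by
  rw [← Finset.sum_fiberwise_of_maps_to (g := v) (t := I.image v)
    (fun i hi => Finset.mem_image_of_mem v hi) (fun i => w i • L (v i))]
  rw [Finset.sum_filter]
  refine Finset.sum_congr rfl fun N hN => ?_
  have h1 : ∑ i ∈ I.filter (fun i => v i = N), w i • L (v i)
      = (∑ i ∈ I.filter (fun i => v i = N), w i) • L N := by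
    rw [Finset.sum_smul]
    refine Finset.sum_congr rfl fun i hi => ?_
    rw [(Finset.mem_filter.mp hi).2]
  rw [h1]
  rcases zmod2_cases (∑ i ∈ I.filter (fun i => v i = N), w i) with h | h
  · rw [h, zero_smul, if_neg (by decide)]
  · rw [h, one_smul, if_pos rfl]

lemma prod_eq_sum_essSet (A : Finset ℕ) (hA : ∀ a ∈ A, a ≠ 0) :
    ∏ a ∈ A, (L a - 1) = ∑ N ∈ essSet A, L N := by
  have h1 : ∀ a ∈ A, L a - 1 = L a + 1 := fun a _ => by
    rw [CharTwo.sub_eq_add]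
  rw [Finset.prod_congr rfl h1, Finset.prod_add]
  simp only [Finset.prod_const_one, mul_one]
  have h2 : ∀ T ∈ A.powerset, ∏ t ∈ T, L t = cw T • L (T.lcm id) := fun T hT =>
    prod_L T (fun t ht => hA t (Finset.mem_powerset.mp hT ht))
  rw [Finset.sum_congr rfl h2, group_sum]
  rfl

lemma mem_essSet_iff (A : Finset ℕ) (N : ℕ) :
    N ∈ essSet A ↔ (∑ T ∈ A.powerset.filter (fun T => T.lcm id = N), cw T) = 1 := by
  constructor
  · intro h
    exact (Finset.mem_filter.mp h).2
  · intro h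
    rw [essSet, Finset.mem_filter]
    refine ⟨?_, h⟩
    obtain ⟨T, hT, -⟩ := Finset.exists_ne_zero_of_sum_ne_zero (by rw [h]; decide)
    obtain ⟨hTA, hTl⟩ := Finset.mem_filter.mp hT
    rw [Finset.mem_image]
    exact ⟨T, hTA, hTl⟩

lemma essSet_pos (A : Finset ℕ) (hA : ∀ a ∈ A, a ≠ 0) : ∀ N ∈ essSet A, N ≠ 0 := by
  intro N hN
  obtain ⟨hNim, -⟩ := Finset.mem_filter.mp hN
  obtain ⟨T, hTA, rfl⟩ := Finset.mem_image.mp hNim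
  exact finset_lcm_ne_zero (fun t ht => hA t (Finset.mem_powerset.mp hTA ht))

lemma indepL {s t : Finset ℕ} (hs : ∀ N ∈ s, N ≠ 0) (ht : ∀ N ∈ t, N ≠ 0)
    (h : ∑ N ∈ s, L N = ∑ N ∈ t, L N) : s = t := by
  by_contra hne
  have hΔ : (s ∆ t).Nonempty := by
    rw [Finset.nonempty_iff_ne_empty]
    intro hc
    exact hne (symmDiff_eq_bot.mp hc)
  set N₀ := (s ∆ t).max' hΔ with hN₀def
  have hN₀mem : N₀ ∈ s ∆ t := Finset.max'_mem _ hΔ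
  have hN₀pos : N₀ ≠ 0 := by
    rcases Finset.mem_symmDiff.mp hN₀mem with ⟨h1, -⟩ | ⟨h1, -⟩
    · exact hs _ h1
    · exact ht _ h1
  obtain ⟨ζ, hζ⟩ := exists_prim N₀ hN₀pos
  have happ : ∀ u : Finset ℕ, (∀ N ∈ u, N ≠ 0) → (∑ N ∈ u, L N).coeff ζ
      = ((u.filter (fun N => N₀ ∣ N)).card : ZMod 2) := by
    intro u hu
    rw [MonoidAlgebra.coeff_sum, Finset.sum_apply']
    rw [Finset.sum_congr rfl (fun N hN => by
      haveI : NeZero N := ⟨hu N hN⟩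
      rw [L_apply N ζ])]
    simp only [hζ]
    rw [Finset.sum_boole]
  have hcards : ((s.filter (fun N => N₀ ∣ N)).card : ZMod 2)
      = ((t.filter (fun N => N₀ ∣ N)).card : ZMod 2) := by
    rw [← happ s hs, ← happ t ht, h]
  have hsplit : ∀ u w : Finset ℕ, (∀ N ∈ u, N ≠ 0) → u ∆ w ⊆ s ∆ t →
      u.filter (fun N => N₀ ∣ N) = (u ∩ w).filter (fun N => N₀ ∣ N) ∪ u.filter (fun N => N = N₀) := by
    intro u w hu hsub
    ext N
    simp only [Finset.mem_union, Finset.mem_filter, Finset.mem_inter]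
    constructor
    · rintro ⟨hNu, hdvd⟩
      by_cases hNw : N ∈ w
      · exact Or.inl ⟨⟨hNu, hNw⟩, hdvd⟩
      · right
        refine ⟨hNu, ?_⟩
        have hNΔ : N ∈ s ∆ t := hsub (Finset.mem_symmDiff.mpr (Or.inl ⟨hNu, hNw⟩))
        have hle : N ≤ N₀ := Finset.le_max' _ _ hNΔ
        have hge : N₀ ≤ N := Nat.le_of_dvd (Nat.pos_of_ne_zero (hu N hNu)) hdvd
        omega
    · rintro (⟨⟨hNu, -⟩, hdvd⟩ | ⟨hNu, rfl⟩)
      · exact ⟨hNu, hdvd⟩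
      · exact ⟨hNu, dvd_rfl⟩
  have hdisj : ∀ u w : Finset ℕ, N₀ ∉ u ∩ w →
      Disjoint ((u ∩ w).filter (fun N => N₀ ∣ N)) (u.filter (fun N => N = N₀)) := by
    intro u w hno
    rw [Finset.disjoint_left]
    rintro N hN1 hN2
    obtain ⟨hNuw, -⟩ := Finset.mem_filter.mp hN1
    obtain ⟨-, rfl⟩ := Finset.mem_filter.mp hN2
    exact hno hNuw
  have hN₀notin : N₀ ∉ s ∩ t := by
    intro hc
    rcases Finset.mem_symmDiff.mp hN₀mem with ⟨-, h2⟩ | ⟨-, h2⟩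
    · exact h2 (Finset.mem_inter.mp hc).2
    · exact h2 (Finset.mem_inter.mp hc).1
  have hsub1 : s ∆ t ⊆ s ∆ t := le_refl _
  have hsub2 : t ∆ s ⊆ s ∆ t := by rw [symmDiff_comm]
  have hcard_s := congrArg Finset.card (hsplit s t hs hsub1)
  have hcard_t := congrArg Finset.card (hsplit t s ht hsub2)
  rw [Finset.card_union_of_disjoint (hdisj s t hN₀notin)] at hcard_s
  rw [Finset.card_union_of_disjoint (hdisj t s (by rwa [Finset.inter_comm]))] at hcard_t
  have hfe : ∀ u : Finset ℕ, u.filter (fun N => N = N₀) = if N₀ ∈ u then {N₀} else ∅ := by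
    intro u
    split
    · ext N
      simp only [Finset.mem_filter, Finset.mem_singleton]
      constructor
      · rintro ⟨-, rfl⟩; rfl
      · rintro rfl; exact ⟨by assumption, rfl⟩
    · rw [Finset.filter_eq_empty_iff]
      rintro N hN rfl
      exact absurd hN (by assumption)
  have hic : (s ∩ t).filter (fun N => N₀ ∣ N) = (t ∩ s).filter (fun N => N₀ ∣ N) := by
    rw [Finset.inter_comm]
  rcases Finset.mem_symmDiff.mp hN₀mem with ⟨h1, h2⟩ | ⟨h1, h2⟩
  · rw [hfe s, if_pos h1] at hcard_s
    rw [hfe t, if_neg h2] at hcard_t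
    rw [hcard_s, hcard_t, hic] at hcards
    simp only [Finset.card_singleton, Finset.card_empty] at hcards
    rw [Nat.cast_add, Nat.cast_add] at hcards
    simp at hcards
  · rw [hfe s, if_neg h2] at hcard_s
    rw [hfe t, if_pos h1] at hcard_t
    rw [hcard_s, hcard_t, hic] at hcards
    simp only [Finset.card_singleton, Finset.card_empty] at hcards
    rw [Nat.cast_add, Nat.cast_add] at hcards
    simp at hcards

lemma lcm_singleton_nat (m : ℕ) : ({m} : Finset ℕ).lcm id = m := by
  simp [Finset.lcm_singleton]

lemma cw_singleton (m : ℕ) (hm : m ≠ 0) : cw {m} = 1 := by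
  rw [cw, Finset.prod_singleton, lcm_singleton_nat, Nat.div_self (Nat.pos_of_ne_zero hm)]
  norm_num

lemma cw_even_of_two {T : Finset ℕ} (hT : ∀ t ∈ T, t ≠ 0) {e₁ e₂ : ℕ}
    (h1 : e₁ ∈ T) (h2 : e₂ ∈ T) (hne : e₁ ≠ e₂) (he₁ : Even e₁) (he₂ : Even e₂) :
    cw T = 0 := by
  have hL0 : T.lcm id ≠ 0 := finset_lcm_ne_zero hT
  have hLpos : 0 < T.lcm id := Nat.pos_of_ne_zero hL0
  have hdvd : ∀ a ∈ T, a ∣ (∏ t ∈ T, t) / 2 := by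
    intro a ha
    obtain ⟨e, heT, hev⟩ : ∃ e, e ∈ T.erase a ∧ Even e := by
      rcases eq_or_ne a e₁ with rfl | hane
      · exact ⟨e₂, Finset.mem_erase.mpr ⟨fun h => hne h.symm, h2⟩, he₂⟩
      · exact ⟨e₁, Finset.mem_erase.mpr ⟨fun h => hane h.symm, h1⟩, he₁⟩
    have hprod : ∏ t ∈ T, t = a * ∏ t ∈ T.erase a, t := (Finset.mul_prod_erase T _ ha).symm
    have h2r : 2 ∣ ∏ t ∈ T.erase a, t := dvd_trans hev.two_dvd (Finset.dvd_prod_of_mem id heT)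
    obtain ⟨r, hr⟩ := h2r
    rw [hprod, hr, show a * (2 * r) = 2 * (a * r) by ring, Nat.mul_div_cancel_left _ two_pos]
    exact Dvd.intro r rfl
  have hLd : T.lcm id ∣ (∏ t ∈ T, t) / 2 := Finset.lcm_dvd hdvd
  obtain ⟨s, hs⟩ := hLd
  have h2P : 2 ∣ ∏ t ∈ T, t := dvd_trans he₁.two_dvd (Finset.dvd_prod_of_mem id h1)
  obtain ⟨P2, hP2⟩ := h2P
  have hP2' : P2 = T.lcm id * s := by
    rw [hP2, Nat.mul_div_cancel_left _ two_pos] at hs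
    exact hs
  have hfin : (∏ t ∈ T, t) = T.lcm id * (2 * s) := by
    rw [hP2, hP2']; ring
  rw [cw, hfin, Nat.mul_div_cancel_left _ hLpos]
  exact even_cast (even_two_mul s)

/-- the essential condition on a finite set of exponents -/
def EssP (A : Finset ℕ) : Prop := ∀ a ∈ A, ∀ b ∈ A, b ≠ a → Odd b → ¬ b ∣ a

lemma ne_of_odd_even {t m : ℕ} (ht : Odd t) (hm : Even m) : t ≠ m := by
  rintro rfl
  rw [Nat.odd_iff] at ht
  rw [Nat.even_iff] at hm
  omega

lemma mem_essSet_odd {A : Finset ℕ} {m : ℕ} (hA2 : ∀ a ∈ A, 2 ≤ a) (hEss : EssP A)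
    (hmA : m ∈ A) (hmodd : Odd m) : m ∈ essSet A := by
  rw [mem_essSet_iff]
  have hfil : A.powerset.filter (fun T => T.lcm id = m) = {{m}} := by
    ext T
    simp only [Finset.mem_filter, Finset.mem_powerset, Finset.mem_singleton]
    constructor
    · rintro ⟨hTA, hlcm⟩
      have hsub : T ⊆ {m} := by
        intro t ht
        rw [Finset.mem_singleton]
        have htd : t ∣ m := by rw [← hlcm]; exact Finset.dvd_lcm ht
        by_contra htm
        exact hEss m hmA t (hTA ht) htm (odd_of_dvd_odd htd hmodd) htd
      rcases Finset.subset_singleton_iff.mp hsub with rfl | rfl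
      · exfalso
        rw [Finset.lcm_empty] at hlcm
        have := hA2 m hmA
        omega
      · rfl
    · rintro rfl
      exact ⟨Finset.singleton_subset_iff.mpr hmA, lcm_singleton_nat m⟩
  rw [hfil, Finset.sum_singleton]
  exact cw_singleton m (by have := hA2 m hmA; omega)

lemma mem_essSet_even {A : Finset ℕ} {m : ℕ} (hA2 : ∀ a ∈ A, 2 ≤ a) (hEss : EssP A)
    (hmA : m ∈ A) (hmeven : Even m) : m ∈ essSet A := by
  rw [mem_essSet_iff]
  rw [Finset.sum_eq_single {m}]
  · exact cw_singleton m (by have := hA2 m hmA; omega)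
  · intro T hT hTne
    obtain ⟨hTA', hlcm⟩ := Finset.mem_filter.mp hT
    have hTA := Finset.mem_powerset.mp hTA'
    have hT0 : ∀ t ∈ T, t ≠ 0 := fun t ht => by have := hA2 t (hTA ht); omega
    have hte : ∀ t ∈ T, Even t := by
      intro t ht
      rcases Nat.even_or_odd t with he | ho
      · exact he
      · exfalso
        have htd : t ∣ m := by rw [← hlcm]; exact Finset.dvd_lcm ht
        exact hEss m hmA t (hTA ht) (ne_of_odd_even ho hmeven) ho htd
    have hTne' : T.Nonempty := by
      rcases Finset.eq_empty_or_nonempty T with rfl | h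
      · exfalso
        rw [Finset.lcm_empty] at hlcm
        have := hA2 m hmA
        omega
      · exact h
    have hcard : 1 < T.card := by
      rcases Nat.lt_or_ge T.card 2 with h | h
      · exfalso
        have hc1 : T.card = 1 := by
          have := Finset.card_pos.mpr hTne'
          omega
        obtain ⟨e, rfl⟩ := Finset.card_eq_one.mp hc1
        rw [lcm_singleton_nat] at hlcm
        exact hTne (by rw [hlcm])
      · exact h
    obtain ⟨e₁, he₁, e₂, he₂, hne⟩ := Finset.one_lt_card.mp hcard
    exact cw_even_of_two hT0 he₁ he₂ hne (hte _ he₁) (hte _ he₂)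
  · intro hmem
    exfalso
    apply hmem
    rw [Finset.mem_filter]
    exact ⟨Finset.mem_powerset.mpr (Finset.singleton_subset_iff.mpr hmA), lcm_singleton_nat m⟩

lemma not_mem_essSet_odd {A B : Finset ℕ} {m : ℕ} (hA2 : ∀ a ∈ A, 2 ≤ a)
    (hEssA : EssP A) (hmA : m ∈ A) (hmB : m ∉ B) (hmodd : Odd m)
    (hmin : ∀ t ∈ B, t ∉ A → Odd t → t ∣ m → t = m) : m ∉ essSet B := by
  rw [mem_essSet_iff]
  have hfil : B.powerset.filter (fun T => T.lcm id = m) = ∅ := by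
    rw [Finset.filter_eq_empty_iff]
    intro T hT hlcm
    have hTB := Finset.mem_powerset.mp hT
    rcases Finset.eq_empty_or_nonempty T with rfl | ⟨t, ht⟩
    · rw [Finset.lcm_empty] at hlcm
      have := hA2 m hmA
      omega
    · have htd : t ∣ m := by rw [← hlcm]; exact Finset.dvd_lcm ht
      have hto : Odd t := odd_of_dvd_odd htd hmodd
      by_cases htA : t ∈ A
      · have htm : t ≠ m := fun h => hmB (h ▸ hTB ht)
        exact hEssA m hmA t htA htm hto htd
      · exact hmB ((hmin t (hTB ht) htA hto htd) ▸ hTB ht)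
  rw [hfil, Finset.sum_empty]
  decide

lemma not_mem_essSet_even {A B : Finset ℕ} {m : ℕ} (hA2 : ∀ a ∈ A, 2 ≤ a)
    (hB2 : ∀ b ∈ B, 2 ≤ b) (hEssA : EssP A) (hmA : m ∈ A) (hmB : m ∉ B) (hmeven : Even m)
    (hodd_sub : ∀ t, Odd t → t ∈ B → t ∈ A) : m ∉ essSet B := by
  rw [mem_essSet_iff]
  have hzero : ∑ T ∈ B.powerset.filter (fun T => T.lcm id = m), cw T = 0 := by
    apply Finset.sum_eq_zero
    intro T hT
    obtain ⟨hTB', hlcm⟩ := Finset.mem_filter.mp hT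
    have hTB := Finset.mem_powerset.mp hTB'
    have hT0 : ∀ t ∈ T, t ≠ 0 := fun t ht => by have := hB2 t (hTB ht); omega
    have hte : ∀ t ∈ T, Even t := by
      intro t ht
      rcases Nat.even_or_odd t with he | ho
      · exact he
      · exfalso
        have htd : t ∣ m := by rw [← hlcm]; exact Finset.dvd_lcm ht
        exact hEssA m hmA t (hodd_sub t ho (hTB ht)) (ne_of_odd_even ho hmeven) ho htd
    have hTne' : T.Nonempty := by
      rcases Finset.eq_empty_or_nonempty T with rfl | h
      · exfalso
        rw [Finset.lcm_empty] at hlcm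
        have := hA2 m hmA
        omega
      · exact h
    have hcard : 1 < T.card := by
      rcases Nat.lt_or_ge T.card 2 with h | h
      · exfalso
        have hc1 : T.card = 1 := by
          have := Finset.card_pos.mpr hTne'
          omega
        obtain ⟨e, rfl⟩ := Finset.card_eq_one.mp hc1
        rw [lcm_singleton_nat] at hlcm
        exact hmB (hlcm ▸ hTB (Finset.mem_singleton_self e))
      · exact h
    obtain ⟨e₁, he₁, e₂, he₂, hne⟩ := Finset.one_lt_card.mp hcard
    exact cw_even_of_two hT0 he₁ he₂ hne (hte _ he₁) (hte _ he₂)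
  rw [hzero]
  decide

lemma essential_inj {A B : Finset ℕ} (hA2 : ∀ a ∈ A, 2 ≤ a) (hB2 : ∀ b ∈ B, 2 ≤ b)
    (hEssA : EssP A) (hEssB : EssP B)
    (h : ∏ a ∈ A, (L a - 1) = ∏ b ∈ B, (L b - 1)) : A = B := by
  have hA0 : ∀ a ∈ A, a ≠ 0 := fun a ha => by have := hA2 a ha; omega
  have hB0 : ∀ b ∈ B, b ≠ 0 := fun b hb => by have := hB2 b hb; omega
  have hs : essSet A = essSet B := by
    apply indepL (essSet_pos A hA0) (essSet_pos B hB0)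
    rw [← prod_eq_sum_essSet A hA0, ← prod_eq_sum_essSet B hB0]
    exact h
  by_contra hne
  have hΔ : (A ∆ B).Nonempty := by
    rw [Finset.nonempty_iff_ne_empty]
    intro hc
    exact hne (symmDiff_eq_bot.mp hc)
  by_cases hoddΔ : ∃ t ∈ A ∆ B, Odd t
  · obtain ⟨t₀, ht₀, ht₀o⟩ := hoddΔ
    set S := (A ∆ B).filter (fun t => Odd t) with hSdef
    have hSne : S.Nonempty := ⟨t₀, Finset.mem_filter.mpr ⟨ht₀, ht₀o⟩⟩
    set m := S.min' hSne with hmdef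
    have hmS : m ∈ S := Finset.min'_mem _ hSne
    obtain ⟨hmΔ, hmo⟩ := Finset.mem_filter.mp hmS
    have hm2 : 2 ≤ m := by
      rcases Finset.mem_symmDiff.mp hmΔ with ⟨h1, -⟩ | ⟨h1, -⟩
      · exact hA2 m h1
      · exact hB2 m h1
    have hmin : ∀ t, t ∈ A ∆ B → Odd t → t ∣ m → t = m := by
      intro t htΔ hto htd
      have htS : t ∈ S := Finset.mem_filter.mpr ⟨htΔ, hto⟩
      have h1 : m ≤ t := Finset.min'_le _ _ htS
      have h2 : t ≤ m := Nat.le_of_dvd (by omega) htd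
      omega
    rcases Finset.mem_symmDiff.mp hmΔ with ⟨h1, h2⟩ | ⟨h1, h2⟩
    · have hin := mem_essSet_odd hA2 hEssA h1 hmo
      have hout := not_mem_essSet_odd hA2 hEssA h1 h2 hmo
        (fun t htB htA hto htd => hmin t (Finset.mem_symmDiff.mpr (Or.inr ⟨htB, htA⟩)) hto htd)
      exact hout (hs ▸ hin)
    · have hin := mem_essSet_odd hB2 hEssB h1 hmo
      have hout := not_mem_essSet_odd hB2 hEssB h1 h2 hmo
        (fun t htA htB hto htd => hmin t (Finset.mem_symmDiff.mpr (Or.inl ⟨htA, htB⟩)) hto htd)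
      exact hout (hs ▸ hin)
  · push_neg at hoddΔ
    obtain ⟨m, hmΔ⟩ := hΔ
    have hmev : Even m := Nat.not_odd_iff_even.mp (hoddΔ m hmΔ)
    rcases Finset.mem_symmDiff.mp hmΔ with ⟨h1, h2⟩ | ⟨h1, h2⟩
    · have hin := mem_essSet_even hA2 hEssA h1 hmev
      have hout := not_mem_essSet_even hA2 hB2 hEssA h1 h2 hmev
        (fun t hto htB => by
          by_contra htA
          exact (hoddΔ t (Finset.mem_symmDiff.mpr (Or.inr ⟨htB, htA⟩))) hto)
      exact hout (hs ▸ hin)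
    · have hin := mem_essSet_even hB2 hEssB h1 hmev
      have hout := not_mem_essSet_even hB2 hA2 hEssB h1 h2 hmev
        (fun t hto htA => by
          by_contra htB
          exact (hoddΔ t (Finset.mem_symmDiff.mpr (Or.inl ⟨htA, htB⟩))) hto)
      exact hout (hs ▸ hin)

lemma EssP_essential (E : Multiset ℕ) : EssP (essentialExponents E) := by
  intro a ha b hb hne hbo
  have hbE : b ∈ E := Multiset.mem_toFinset.mp (Finset.mem_filter.mp hb).1
  exact (Finset.mem_filter.mp ha).2.2 b hbE hne hbo

lemma two_le_essential (E : Multiset ℕ) (hE : ∀ a ∈ E, 2 ≤ a) :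
    ∀ a ∈ essentialExponents E, 2 ≤ a := by
  intro a ha
  exact hE a (Multiset.mem_toFinset.mp (Finset.mem_filter.mp ha).1)

lemma phi_prod (E : Multiset ℕ) :
    phi ((E.map fun a => Lambda a - 1).prod) = Pm E := by
  rw [map_multiset_prod, Multiset.map_map, Pm]
  congr 1
  apply Multiset.map_congr rfl
  intro a _
  simp only [Function.comp_apply, map_sub, phi_Lambda, map_one]

end FM

/-- Fox–Milnor type relation for Brieskorn polynomials: for multisets of exponents
`E_f = {a_1, …, a_{n+1}}` and `E_g = {b_1, …, b_{n+1}}` with all entries `≥ 2`,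
`∏ (Λ_{a_i} - 1) ≡ ∏ (Λ_{b_i} - 1) (mod 2)` in `ℤ[ℂˣ]` iff the essential exponent sets
coincide. -/
theorem foxMilnor_iff_essential_eq (n : ℕ) (Ef Eg : Multiset ℕ)
    (hfc : Multiset.card Ef = n + 1) (hgc : Multiset.card Eg = n + 1)
    (hf2 : ∀ a ∈ Ef, 2 ≤ a) (hg2 : ∀ b ∈ Eg, 2 ≤ b) :
    Mod2 ((Ef.map fun a => Lambda a - 1).prod) ((Eg.map fun a => Lambda a - 1).prod) ↔
      essentialExponents Ef = essentialExponents Eg := by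
  rw [FM.mod2_iff, FM.phi_prod, FM.phi_prod, FM.Pm_eq_essential Ef hf2,
    FM.Pm_eq_essential Eg hg2]
  constructor
  · intro h
    exact FM.essential_inj (FM.two_le_essential Ef hf2) (FM.two_le_essential Eg hg2)
      (FM.EssP_essential Ef) (FM.EssP_essential Eg) h
  · intro h
    rw [h]

end
end

section
/- Let Δ ∈ ℤ[t] be a (nonzero, monic) polynomial that is a product of cyclotomic polynomials. Then there exists γ ∈ ℤ[t] with Δ(t) = ± t^{deg γ} · γ(t) · γ(t^{-1}) (i.e. Δ equals ± γ times the reversal of γ) if and only if there exists γ ∈ ℤ[t] with Δ = γ². -/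
open Polynomial

private lemma fm_reverse_one : (1 : Polynomial ℤ).reverse = 1 := by
  rw [← C_1, reverse_C]

private lemma fm_rev_finset_prod (s : Finset ℕ) (f : ℕ → Polynomial ℤ) :
    (∏ i ∈ s, f i).reverse = ∏ i ∈ s, (f i).reverse := by
  classical
  induction s using Finset.cons_induction with
  | empty => simpa using fm_reverse_one
  | cons a s ha ih =>
      rw [Finset.prod_cons, Finset.prod_cons, reverse_mul_of_domain, ih]

private lemma fm_reverse_X_pow_sub_one (n : ℕ) (hn : 0 < n) :
    ((X : Polynomial ℤ) ^ n - 1).reverse = -((X : Polynomial ℤ) ^ n - 1) := by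
  have hdeg : ((X : Polynomial ℤ) ^ n - 1).natDegree = n := by
    simpa using natDegree_X_pow_sub_C (n := n) (r := (1 : ℤ))
  rw [reverse, hdeg, reflect_sub, reflect_one, reflect_monomial, revAt_le (le_refl n),
    Nat.sub_self, pow_zero]
  ring

private lemma fm_reverse_cyclotomic :
    ∀ m : ℕ, 0 < m →
      (cyclotomic m ℤ).reverse = (if m = 1 then (-1 : Polynomial ℤ) else 1) * cyclotomic m ℤ := by
  intro m
  induction m using Nat.strong_induction_on with
  | _ m ih =>
    intro hm
    by_cases hm1 : m = 1
    · subst hm1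
      rw [cyclotomic_one]
      have hdeg : ((X : Polynomial ℤ) - 1).natDegree = 1 := by
        simpa using natDegree_X_sub_C (1 : ℤ)
      rw [reverse, hdeg, reflect_sub, reflect_one, ← pow_one (X : Polynomial ℤ),
        reflect_monomial, revAt_le (le_refl 1), Nat.sub_self, pow_zero]
      rw [if_pos rfl]
      ring
    · have hm2 : 1 < m := lt_of_le_of_ne hm (fun h => hm1 h.symm)
      have hprod := prod_cyclotomic_eq_X_pow_sub_one hm ℤ
      have h2 : ∏ d ∈ Nat.divisors m, (cyclotomic d ℤ).reverse
          = -(∏ d ∈ Nat.divisors m, cyclotomic d ℤ) := by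
        rw [← fm_rev_finset_prod, hprod, fm_reverse_X_pow_sub_one m hm]
      have hsplit : Nat.divisors m = insert m (Nat.properDivisors m) :=
        (Nat.insert_self_properDivisors hm.ne').symm
      have hnotmem : m ∉ Nat.properDivisors m := by
        intro h
        exact absurd (Nat.mem_properDivisors.mp h).2 (lt_irrefl m)
      rw [hsplit, Finset.prod_insert hnotmem, Finset.prod_insert hnotmem] at h2
      have hip : ∀ d ∈ Nat.properDivisors m,
          (cyclotomic d ℤ).reverse
            = (if d = 1 then (-1 : Polynomial ℤ) else 1) * cyclotomic d ℤ := by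
        intro d hd
        obtain ⟨hdvd, hlt⟩ := Nat.mem_properDivisors.mp hd
        exact ih d hlt (Nat.pos_of_dvd_of_pos hdvd hm)
      have hPp : ∏ d ∈ Nat.properDivisors m, (cyclotomic d ℤ).reverse
          = -(∏ d ∈ Nat.properDivisors m, cyclotomic d ℤ) := by
        rw [Finset.prod_congr rfl hip, Finset.prod_mul_distrib]
        have h1mem : 1 ∈ Nat.properDivisors m :=
          Nat.one_mem_properDivisors_iff_one_lt.mpr hm2
        have hsign : (∏ d ∈ Nat.properDivisors m, (if d = 1 then (-1 : Polynomial ℤ) else 1))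
            = -1 := by
          rw [Finset.prod_ite_eq' (Nat.properDivisors m) 1 (fun _ => (-1 : Polynomial ℤ))]
          simp [h1mem]
        rw [hsign]
        ring
      rw [hPp] at h2
      have hPpne : (∏ d ∈ Nat.properDivisors m, cyclotomic d ℤ) ≠ 0 :=
        Finset.prod_ne_zero_iff.mpr fun d _ => (cyclotomic.monic d ℤ).ne_zero
      have h3 : (cyclotomic m ℤ).reverse * (∏ d ∈ Nat.properDivisors m, cyclotomic d ℤ)
          = cyclotomic m ℤ * (∏ d ∈ Nat.properDivisors m, cyclotomic d ℤ) := by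
        rw [mul_neg, neg_inj] at h2
        exact h2
      rw [if_neg hm1, one_mul]
      exact mul_right_cancel₀ hPpne h3

private lemma fm_reverse_cyclotomic' (m : ℕ) (hm : 0 < m) :
    (cyclotomic m ℤ).reverse = cyclotomic m ℤ ∨
      (cyclotomic m ℤ).reverse = -cyclotomic m ℤ := by
  have := fm_reverse_cyclotomic m hm
  by_cases h : m = 1
  · right; rw [this, if_pos h]; ring
  · left; rw [this, if_neg h]; ring

private lemma fm_monic_prod (l : List ℕ) :
    ((l.map fun m => cyclotomic m ℤ).prod).Monic := by
  induction l with
  | nil => simpa using monic_one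
  | cons a t ih => simpa using (cyclotomic.monic a ℤ).mul ih

private lemma fm_reverse_prod (l : List ℕ) (hl : ∀ m ∈ l, 0 < m) :
    ((l.map fun m => cyclotomic m ℤ).prod).reverse = (l.map fun m => cyclotomic m ℤ).prod ∨
      ((l.map fun m => cyclotomic m ℤ).prod).reverse
        = -(l.map fun m => cyclotomic m ℤ).prod := by
  induction l with
  | nil => left; simpa using fm_reverse_one
  | cons a t ih =>
      have ha := fm_reverse_cyclotomic' a (hl a List.mem_cons_self)
      have ht := ih fun m hm => hl m (List.mem_cons_of_mem a hm)
      simp only [List.map_cons, List.prod_cons, reverse_mul_of_domain]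
      rcases ha with ha | ha <;> rcases ht with ht | ht <;> rw [ha, ht]
      · left; rfl
      · right; ring
      · right; ring
      · left; ring

private lemma fm_key : ∀ n : ℕ, ∀ l : List ℕ, l.length ≤ n → (∀ m ∈ l, 0 < m) →
    ∀ γ : Polynomial ℤ,
      ((l.map fun m => cyclotomic m ℤ).prod = γ * γ.reverse ∨
        (l.map fun m => cyclotomic m ℤ).prod = -(γ * γ.reverse)) →
      ∃ σ : Polynomial ℤ, (l.map fun m => cyclotomic m ℤ).prod = σ ^ 2 := by
  intro n
  induction n with
  | zero =>
      intro l hlen _ _ _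
      rw [List.length_eq_zero_iff.mp (Nat.le_zero.mp hlen)]
      exact ⟨1, by simp⟩
  | succ n ih =>
      intro l hlen hpos γ hγ
      set f : ℕ → Polynomial ℤ := fun m => cyclotomic m ℤ with hf
      by_cases hdeg : γ.natDegree = 0
      · obtain ⟨c, rfl⟩ := natDegree_eq_zero.mp hdeg
        rw [reverse_C, ← C_mul] at hγ
        have hmon := (fm_monic_prod l).leadingCoeff
        rcases hγ with hγ | hγ
        · have hc : c * c = 1 := by rw [hγ, leadingCoeff_C] at hmon; exact hmon
          exact ⟨1, by rw [hγ, hc]; simp⟩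
        · exfalso
          rw [hγ, ← C_neg, leadingCoeff_C] at hmon
          nlinarith [hmon]
      · have hγne : γ ≠ 0 := fun h => hdeg (by rw [h]; simp)
        have hγnu : ¬IsUnit γ := fun h => hdeg (natDegree_eq_zero_of_isUnit h)
        obtain ⟨p, hpirr, hpdvd⟩ := WfDvdMonoid.exists_irreducible_factor hγnu hγne
        have hpprime : Prime p := UniqueFactorizationMonoid.irreducible_iff_prime.mp hpirr
        have hpΔ : p ∣ (l.map f).prod := by
          have h1 : p ∣ γ * γ.reverse := hpdvd.trans (dvd_mul_right _ _)
          rcases hγ with hγ | hγ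
          · rw [hγ]; exact h1
          · rw [hγ]; exact (dvd_neg).mpr h1
        obtain ⟨q, hqmem, hqdvd⟩ := hpprime.dvd_prod_iff.mp hpΔ
        obtain ⟨m, hml, rfl⟩ := List.mem_map.mp hqmem
        have hmpos : 0 < m := hpos m hml
        have hΦirr : Irreducible (f m) := cyclotomic.irreducible hmpos
        have hassoc : Associated p (f m) := hpirr.associated_of_dvd hΦirr hqdvd
        have hΦγ : f m ∣ γ := hassoc.symm.dvd.trans hpdvd
        obtain ⟨γ₁, hγ₁⟩ := hΦγ
        have hΦne : f m ≠ 0 := (cyclotomic.monic m ℤ).ne_zero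
        have hrevΦ := fm_reverse_cyclotomic' m hmpos
        -- Δ = ± Φ^2 * (γ₁ * rev γ₁)
        have hΔ2 : (l.map f).prod = f m ^ 2 * (γ₁ * γ₁.reverse) ∨
            (l.map f).prod = -(f m ^ 2 * (γ₁ * γ₁.reverse)) := by
          have hrev : γ.reverse = (f m).reverse * γ₁.reverse := by
            rw [hγ₁, reverse_mul_of_domain]
          rcases hγ with hγ | hγ <;> rcases hrevΦ with hr | hr
          · left; rw [hγ, hrev, hr, hγ₁]; ring
          · right; rw [hγ, hrev, hr, hγ₁]; ring
          · right; rw [hγ, hrev, hr, hγ₁]; ring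
          · left; rw [hγ, hrev, hr, hγ₁]; ring
        -- peel off one copy of Φ from the list
        have hsplit1 : (l.map f).prod = f m * ((l.erase m).map f).prod := by
          rw [List.map_erase (cyclotomic_injective (R := ℤ)) l,
            List.prod_erase (List.mem_map.mpr ⟨m, hml, rfl⟩)]
        -- Φ divides the rest
        have hΦ2Δ : f m ^ 2 ∣ (l.map f).prod := by
          rcases hΔ2 with h | h
          · rw [h]; exact Dvd.intro _ rfl
          · rw [h]; exact (dvd_neg).mpr (Dvd.intro _ rfl)
        have hΦP1 : f m ∣ ((l.erase m).map f).prod := by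
          have h := hΦ2Δ
          rw [hsplit1, pow_two] at h
          exact (mul_dvd_mul_iff_left hΦne).mp h
        have hΦprime : Prime (f m) := UniqueFactorizationMonoid.irreducible_iff_prime.mp hΦirr
        obtain ⟨q', hq'mem, hq'dvd⟩ := hΦprime.dvd_prod_iff.mp hΦP1
        obtain ⟨m', hm'l, rfl⟩ := List.mem_map.mp hq'mem
        have hm'pos : 0 < m' := hpos m' (List.mem_of_mem_erase hm'l)
        have heq : f m = f m' :=
          eq_of_monic_of_associated (cyclotomic.monic m ℤ) (cyclotomic.monic m' ℤ)
            (hΦirr.associated_of_dvd (cyclotomic.irreducible hm'pos) hq'dvd)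
        have hmm' : m = m' := cyclotomic_injective (R := ℤ) heq
        subst hmm'
        have hsplit2 : ((l.erase m).map f).prod
            = f m * (((l.erase m).erase m).map f).prod := by
          rw [List.map_erase (cyclotomic_injective (R := ℤ)) (l.erase m),
            List.prod_erase (List.mem_map.mpr ⟨m, hm'l, rfl⟩)]
        have hΔeq : (l.map f).prod = f m ^ 2 * (((l.erase m).erase m).map f).prod := by
          rw [hsplit1, hsplit2, pow_two]; ring
        have hP2 : (((l.erase m).erase m).map f).prod = γ₁ * γ₁.reverse ∨
            (((l.erase m).erase m).map f).prod = -(γ₁ * γ₁.reverse) := by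
          have hne2 : f m ^ 2 ≠ 0 := pow_ne_zero _ hΦne
          rcases hΔ2 with h | h
          · left
            apply mul_left_cancel₀ hne2
            rw [← hΔeq, h]
          · right
            apply mul_left_cancel₀ hne2
            rw [← hΔeq, h, mul_neg]
        have hlen2 : ((l.erase m).erase m).length ≤ n := by
          have h1 : (l.erase m).length = l.length - 1 := List.length_erase_of_mem hml
          have h2 : ((l.erase m).erase m).length = (l.erase m).length - 1 :=
            List.length_erase_of_mem hm'l
          omega
        have hpos2 : ∀ k ∈ (l.erase m).erase m, 0 < k := fun k hk =>
          hpos k (List.mem_of_mem_erase (List.mem_of_mem_erase hk))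
        obtain ⟨σ₁, hσ₁⟩ := ih ((l.erase m).erase m) hlen2 hpos2 γ₁ hP2
        exact ⟨f m * σ₁, by rw [hΔeq, hσ₁]; ring⟩

/-- Let `Δ ∈ ℤ[t]` be a nonzero monic polynomial that is a product of cyclotomic
polynomials. Then `Δ = ± γ(t) · (t^{deg γ} γ(t⁻¹))` for some `γ ∈ ℤ[t]` (i.e. `Δ` equals
`± γ` times the reversal of `γ`) if and only if `Δ` is a square in `ℤ[t]`. -/
theorem foxMilnor_iff_square (Δ : Polynomial ℤ) (hΔ : Δ ≠ 0) (hmonic : Δ.Monic)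
    (hcycl : ∃ l : List ℕ, (∀ m ∈ l, 0 < m) ∧
      Δ = (l.map fun m => Polynomial.cyclotomic m ℤ).prod) :
    (∃ γ : Polynomial ℤ, Δ = γ * γ.reverse ∨ Δ = -(γ * γ.reverse)) ↔
      ∃ γ : Polynomial ℤ, Δ = γ ^ 2 := by
  obtain ⟨l, hposl, rfl⟩ := hcycl
  constructor
  · rintro ⟨γ, hγ⟩
    exact fm_key l.length l le_rfl hposl γ hγ
  · rintro ⟨σ, hσ⟩
    have hrevσ : ((l.map fun m => cyclotomic m ℤ).prod).reverse = σ.reverse ^ 2 := by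
      rw [hσ, pow_two, reverse_mul_of_domain, ← pow_two]
    rcases fm_reverse_prod l hposl with h | h
    · have hsq : σ.reverse ^ 2 = σ ^ 2 := by rw [← hrevσ, h, hσ]
      have hfac : (σ.reverse - σ) * (σ.reverse + σ) = 0 := by ring_nf; linear_combination hsq
      rcases mul_eq_zero.mp hfac with h0 | h0
      · refine ⟨σ, Or.inl ?_⟩
        have : σ.reverse = σ := by linear_combination h0
        rw [hσ, this, pow_two]
      · refine ⟨σ, Or.inr ?_⟩
        have : σ.reverse = -σ := by linear_combination h0
        rw [hσ, this]; ring
    · exfalso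
      have hne : σ ≠ 0 := by
        intro h0
        rw [h0] at hσ
        exact hΔ (by rw [hσ]; ring)
      have h1 : σ.reverse ^ 2 = -(l.map fun m => cyclotomic m ℤ).prod := by
        rw [← hrevσ, h]
      have h2 : (σ.reverse.leadingCoeff) ^ 2 = -1 := by
        have := congrArg leadingCoeff h1
        rwa [leadingCoeff_pow, leadingCoeff_neg, hmonic.leadingCoeff] at this
      nlinarith [h2]
end

section
/- Let a_1, …, a_{n+1} be integers with a_i ≥ 2 for all i. Then ∏_{i=1}^{n+1} (Λ_{a_i} − 1) is not congruent to 0 modulo 2 in ℤ[ℂ*], i.e. there is no z ∈ ℤ[ℂ*] with ∏_{i=1}^{n+1} (Λ_{a_i} − 1) = 2z. (Equivalently, by Brieskorn's formula, the Alexander polynomial of the algebraic knot associated with the Brieskorn polynomial z_1^{a_1} + … + z_{n+1}^{a_{n+1}} is never a square in ℤ[t].) -/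
open scoped Classical

noncomputable instance instFintypeRootsOfUnityC (a : ℕ) [NeZero a] :
    Fintype (rootsOfUnity a ℂ) := Fintype.ofFinite _

abbrev KK := AlgebraicClosure (ZMod 2)

lemma exists_good_char (N : ℕ) (hN : N ≠ 0) :
    ∃ χ : rootsOfUnity N ℂ →* KKˣ,
      ∀ ζ : rootsOfUnity N ℂ, χ ζ = 1 ↔ (ζ : ℂˣ) ^ (2 ^ (N.factorization 2)) = 1 := by
  haveI : NeZero N := ⟨hN⟩
  set k := N.factorization 2 with hk
  set M := N / 2 ^ k with hMdef
  have hMdvd : M ∣ N := Nat.ordCompl_dvd N 2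
  have hModd : ¬ 2 ∣ M := Nat.not_dvd_ordCompl Nat.prime_two hN
  have hM0 : 0 < M := Nat.ordCompl_pos 2 hN
  -- a primitive M-th root of unity in KK
  have hMK : NeZero ((M : ℕ) : KK) :=
    ⟨fun h => hModd ((CharP.cast_eq_zero_iff KK 2 M).mp h)⟩
  have H := IsSepClosed.isCyclotomicExtension ({M} : Set ℕ) KK
    (fun a ha _ => by rwa [Set.mem_singleton_iff.mp ha])
  obtain ⟨η, hη⟩ := H.exists_isPrimitiveRoot (Set.mem_singleton _) hM0.ne'
  have hη' : IsPrimitiveRoot η M := hη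
  have hunit : IsUnit η := hη'.isUnit hM0.ne'
  set ηu : KKˣ := hunit.unit with hηu
  have hηuprim : IsPrimitiveRoot ηu M := by
    apply IsPrimitiveRoot.coe_units_iff.mp
    rwa [IsUnit.unit_spec]
  -- ηu facts
  have hηupow : ∀ j : ℤ, ηu ^ j = 1 ↔ (M : ℤ) ∣ j := fun j => hηuprim.zpow_eq_one_iff_dvd j
  -- the additive hom ℤ →+ Additive KKˣ
  set f : ℤ →+ Additive KKˣ := AddMonoidHom.mk' (fun j => Additive.ofMul (ηu ^ j))
    (fun x y => by simp [zpow_add, ofMul_mul]) with hf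
  set G := rootsOfUnity N ℂ with hG
  have hcard : Nat.card G = N := by
    rw [Complex.card_rootsOfUnity]
  have hfN : f ((Nat.card G : ℕ) : ℤ) = 0 := by
    rw [hcard]
    have : ηu ^ (N : ℤ) = 1 := by
      obtain ⟨c, hc⟩ := hMdvd
      rw [hc]; push_cast; rw [zpow_mul, (hηupow M).mpr dvd_rfl, one_zpow]
    show Additive.ofMul (ηu ^ ((N : ℕ) : ℤ)) = 0
    rw [this]; rfl
  haveI : NeZero (Nat.card G) := ⟨by rw [hcard]; exact hN⟩
  set χ0 : Multiplicative (ZMod (Nat.card G)) →* KKˣ :=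
    AddMonoidHom.toMultiplicativeLeft (ZMod.lift (Nat.card G) ⟨f, hfN⟩) with hχ0
  set e : Multiplicative (ZMod (Nat.card G)) ≃* G :=
    zmodCyclicMulEquiv inferInstance with he
  refine ⟨χ0.comp e.symm.toMonoidHom, ?_⟩
  intro ζ
  set x : ZMod (Nat.card G) := Multiplicative.toAdd (e.symm ζ) with hx
  set j : ℕ := x.val with hj
  have hxval : ((j : ℤ) : ZMod (Nat.card G)) = x := by
    push_cast
    exact ZMod.natCast_rightInverse x
  have hχζ : (χ0.comp e.symm.toMonoidHom) ζ = ηu ^ (j : ℤ) := by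
    show χ0 (e.symm ζ) = ηu ^ (j : ℤ)
    have : e.symm ζ = Multiplicative.ofAdd x := by simp [hx]
    rw [this]
    show (ZMod.lift (Nat.card G) ⟨f, hfN⟩ x).toMul = ηu ^ (j : ℤ)
    rw [← hxval, ZMod.lift_coe]
    rfl
  set g0 : G := e (Multiplicative.ofAdd 1) with hg0
  have horder : orderOf g0 = N := by
    rw [hg0, MulEquiv.orderOf_eq e, orderOf_ofAdd_eq_addOrderOf, ZMod.addOrderOf_one, hcard]
  have hζg0 : ζ = g0 ^ j := by
    have : ζ = e (Multiplicative.ofAdd x) := by simp [hx]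
    rw [this, hg0, ← map_pow]
    congr 1
    rw [← ofAdd_nsmul]
    congr 1
    rw [nsmul_eq_mul, mul_one, ← hxval]; push_cast; rfl
  have hMj : (χ0.comp e.symm.toMonoidHom) ζ = 1 ↔ M ∣ j := by
    rw [hχζ, hηupow, Int.natCast_dvd_natCast]
  have h2k : (ζ : ℂˣ) ^ (2 ^ k) = 1 ↔ M ∣ j := by
    have hcoe : (ζ : ℂˣ) ^ (2 ^ k) = ((ζ ^ (2 ^ k) : G) : ℂˣ) := by
      push_cast; rfl
    rw [hcoe]
    rw [show ((1 : ℂˣ)) = ((1 : G) : ℂˣ) from rfl]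
    rw [Subtype.coe_inj]
    rw [hζg0, ← pow_mul, ← orderOf_dvd_iff_pow_eq_one, horder]
    have hNfac : 2 ^ k * M = N := Nat.ordProj_mul_ordCompl_eq_self N 2
    rw [← hNfac, mul_comm j (2 ^ k)]
    exact Nat.mul_dvd_mul_iff_left (pow_pos two_pos k)
  rw [hMj, h2k]


lemma char_sum_eq_zero (N : ℕ) (hN : N ≠ 0)
    (χ : rootsOfUnity N ℂ →* KKˣ)
    (hχ : ∀ ζ : rootsOfUnity N ℂ, χ ζ = 1 ↔ (ζ : ℂˣ) ^ (2 ^ (N.factorization 2)) = 1)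
    (a : ℕ) [NeZero a] (ha : 2 ≤ a) (hdvd : a ∣ N) :
    ∑ ζ : rootsOfUnity a ℂ,
      ((χ (Subgroup.inclusion (rootsOfUnity_le_of_dvd hdvd) ζ) : KKˣ) : KK) = 0 := by
  haveI : NeZero N := ⟨hN⟩
  set incl : rootsOfUnity a ℂ →* rootsOfUnity N ℂ :=
    Subgroup.inclusion (rootsOfUnity_le_of_dvd hdvd) with hincl
  by_cases htriv : ∀ ζ : rootsOfUnity a ℂ, χ (incl ζ) = 1
  · -- χ is trivial on μ_a, so a must be even, and the sum is a • 1 = 0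
    have h2a : 2 ∣ a := by
      have ha0 : a ≠ 0 := NeZero.ne a
      have hprim := Complex.isPrimitiveRoot_exp a ha0
      set u := hprim.toRootsOfUnity with hu
      have huprim : IsPrimitiveRoot (u : ℂˣ) a := by
        apply IsPrimitiveRoot.coe_units_iff.mp
        rw [IsPrimitiveRoot.val_toRootsOfUnity_coe]
        exact hprim
      have := (hχ (incl u)).mp (htriv u)
      have hcoe : ((incl u : rootsOfUnity N ℂ) : ℂˣ) = (u : ℂˣ) := rfl
      rw [hcoe] at this
      have hdvd2 : a ∣ 2 ^ (N.factorization 2) :=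
        huprim.pow_eq_one_iff_dvd _ |>.mp this
      obtain ⟨i, hik, hia⟩ := (Nat.dvd_prime_pow Nat.prime_two).mp hdvd2
      rcases Nat.eq_zero_or_pos i with hi | hi
      · subst hi; simp at hia; omega
      · exact hia ▸ dvd_pow_self 2 hi.ne'
    calc ∑ ζ : rootsOfUnity a ℂ, ((χ (incl ζ) : KKˣ) : KK)
        = ∑ _ζ : rootsOfUnity a ℂ, (1 : KK) := by
          apply Finset.sum_congr rfl; intro ζ _; rw [htriv ζ, Units.val_one]
      _ = (Fintype.card (rootsOfUnity a ℂ) : KK) := by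
          rw [Finset.sum_const, nsmul_eq_mul, mul_one, Finset.card_univ]
      _ = ((a : ℕ) : KK) := by rw [Fintype.card_eq_nat_card, Complex.card_rootsOfUnity]
      _ = 0 := (CharP.cast_eq_zero_iff KK 2 a).mpr h2a
  · push_neg at htriv
    obtain ⟨ζ0, hζ0⟩ := htriv
    set c : KK := ((χ (incl ζ0) : KKˣ) : KK) with hc
    set S := ∑ ζ : rootsOfUnity a ℂ, ((χ (incl ζ) : KKˣ) : KK) with hS
    have hmul : c * S = S := by
      rw [hS, Finset.mul_sum]
      refine Fintype.sum_equiv (Equiv.mulLeft ζ0) _ _ fun ζ => ?_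
      rw [Equiv.coe_mulLeft, map_mul, map_mul, Units.val_mul, hc]
    have hc1 : c ≠ 1 := fun h => hζ0 (Units.ext (by rw [Units.val_one]; exact h))
    have h0 : (c - 1) * S = 0 := by rw [sub_mul, one_mul, hmul, sub_self]
    rcases mul_eq_zero.mp h0 with h | h
    · exact absurd (sub_eq_zero.mp h) hc1
    · exact h

/-- For integers `a_1, …, a_{n+1} ≥ 2`, the product `∏_{i} (Λ_{a_i} - 1)` (the divisor of
the Alexander polynomial of the Brieskorn polynomial `z_1^{a_1} + ⋯ + z_{n+1}^{a_{n+1}}`)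
is not congruent to `0` modulo `2` in `ℤ[ℂˣ]`. -/
theorem brieskorn_divisor_not_square (n : ℕ) (a : Fin (n + 1) → ℕ) (ha : ∀ i, 2 ≤ a i) :
    ¬ ∃ z : MonoidAlgebra ℤ ℂˣ, ∏ i, (Lambda (a i) - 1) = 2 * z := by
  rintro ⟨z, hz⟩
  haveI : ∀ i, NeZero (a i) := fun i => ⟨by have := ha i; omega⟩
  set N := ∏ i, a i with hNdef
  have hN : N ≠ 0 := Finset.prod_ne_zero_iff.mpr fun i _ => NeZero.ne (a i)
  have hdvd : ∀ i, a i ∣ N := fun i => Finset.dvd_prod_of_mem a (Finset.mem_univ i)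
  obtain ⟨χ, hχ⟩ := exists_good_char N hN
  set L : Fin (n + 1) → MonoidAlgebra ℤ (rootsOfUnity N ℂ) := fun i =>
    ∑ ζ : rootsOfUnity (a i) ℂ,
      MonoidAlgebra.single (Subgroup.inclusion (rootsOfUnity_le_of_dvd (hdvd i)) ζ) (1 : ℤ)
    with hL
  set ι : MonoidAlgebra ℤ (rootsOfUnity N ℂ) →+* MonoidAlgebra ℤ ℂˣ :=
    MonoidAlgebra.mapDomainRingHom ℤ (rootsOfUnity N ℂ).subtype with hι
  have hιL : ∀ i, ι (L i - 1) = Lambda (a i) - 1 := by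
    intro i
    rw [map_sub, map_one]
    congr 1
    rw [hL]
    rw [map_sum]
    rw [Lambda, dif_neg (NeZero.ne (a i))]
    apply Finset.sum_congr rfl
    intro ζ _
    rw [hι, MonoidAlgebra.mapDomainRingHom_apply, MonoidAlgebra.mapDomain_single]
    rfl
  have hP : ι (∏ i, (L i - 1)) = 2 * z := by
    rw [map_prod]
    simp_rw [hιL]
    exact hz
  have heven : ∀ g : rootsOfUnity N ℂ, (2 : ℤ) ∣ (∏ i, (L i - 1)).coeff g := by
    intro g
    have h1 : (∏ i, (L i - 1)).coeff g = (ι (∏ i, (L i - 1))).coeff ((g : ℂˣ)) :=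
      (Finsupp.mapDomain_apply (Subgroup.subtype_injective _) _ _).symm
    rw [h1, hP, two_mul, MonoidAlgebra.coeff_add, Finsupp.add_apply]
    exact ⟨z.coeff (g : ℂˣ), (two_mul (z.coeff (g : ℂˣ))).symm⟩
  set χ' : rootsOfUnity N ℂ →* KK := (Units.coeHom KK).comp χ with hχ'
  set ψ := MonoidAlgebra.lift ℤ KK (rootsOfUnity N ℂ) χ' with hψ
  have h0 : ψ (∏ i, (L i - 1)) = 0 := by
    rw [MonoidAlgebra.lift_apply]
    apply Finset.sum_eq_zero
    intro g _
    show ((∏ i, (L i - 1)).coeff g) • χ' g = 0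
    rw [zsmul_eq_mul, (CharP.intCast_eq_zero_iff KK 2 _).mpr (by exact_mod_cast heven g),
      zero_mul]
  have hψL : ∀ i, ψ (L i) = ∑ ζ : rootsOfUnity (a i) ℂ,
      ((χ (Subgroup.inclusion (rootsOfUnity_le_of_dvd (hdvd i)) ζ) : KKˣ) : KK) := by
    intro i
    rw [hL, hψ, map_sum]
    apply Finset.sum_congr rfl
    intro ζ _
    rw [MonoidAlgebra.lift_single, one_smul, hχ']
    rfl
  have h1 : ψ (∏ i, (L i - 1)) = ∏ _i : Fin (n + 1), (-1 : KK) := by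
    rw [map_prod]
    apply Finset.prod_congr rfl
    intro i _
    rw [map_sub, map_one, hψL i]
    rw [char_sum_eq_zero N hN χ hχ (a i) (ha i) (hdvd i), zero_sub]
  rw [h0, Finset.prod_const] at h1
  exact pow_ne_zero _ (show (-1 : KK) ≠ 0 by simp) h1.symm
end

section
/- Let A and B be finite sets of odd integers, each element ≥ 3, such that within A no element divides a different element of A, and within B no element divides a different element of B. If ∏_{a ∈ A} (Λ_a − 1) ≡ ∏_{b ∈ B} (Λ_b − 1) (mod 2) in ℤ[ℂ*], then A = B. -/
open scoped Classical

local notation "𝔽" => AlgebraicClosure (ZMod 2)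

noncomputable instance : RootableBy 𝔽ˣ ℕ :=
  rootableByOfPowLeftSurj _ _ (fun {n} hn y => by
    obtain ⟨z, hz⟩ := IsAlgClosed.exists_pow_nat_eq (k := 𝔽) (y : 𝔽) (Nat.pos_of_ne_zero hn)
    have hz0 : z ≠ 0 := by
      rintro rfl
      rw [zero_pow hn] at hz
      exact y.ne_zero hz.symm
    exact ⟨Units.mk0 z hz0, by ext; simpa using hz⟩)

noncomputable instance : RootableBy 𝔽ˣ ℤ := Group.rootableByIntOfRootableByNat 𝔽ˣ

noncomputable instance : DivisibleBy (Additive 𝔽ˣ) ℤ where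
  div a n := Additive.ofMul (RootableBy.root a.toMul n)
  div_zero a := by
    show Additive.ofMul (RootableBy.root (Additive.toMul a) (0 : ℤ)) = 0
    rw [RootableBy.root_zero]
    rfl
  div_cancel a hn := by
    show _ • Additive.ofMul (RootableBy.root (Additive.toMul a) _) = a
    rw [← ofMul_zpow, RootableBy.root_cancel a.toMul hn]
    rfl

lemma F_char_two : (2 : 𝔽) = 0 := by
  have := CharP.cast_eq_zero 𝔽 2
  simpa using this

lemma odd_cast_F {a : ℕ} (ha : Odd a) : (a : 𝔽) = 1 := by
  obtain ⟨k, rfl⟩ := ha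
  push_cast
  rw [F_char_two]
  ring

/-- Existence of a character of `ℂˣ` into `𝔽` whose restriction to roots of unity of
order dividing `N` detects exactly divisibility of the order into `d`. -/
lemma exists_char {N d : ℕ} (hN : N ≠ 0) (hNodd : Odd N) (hdN : d ∣ N) :
    ∃ χ : ℂˣ →* 𝔽, ∀ a : ℕ, a ≠ 0 → a ∣ N →
      ((∀ ζ ∈ rootsOfUnity a ℂ, χ ζ = 1) ↔ a ∣ d) := by
  haveI : NeZero N := ⟨hN⟩
  have hNpos : 0 < N := Nat.pos_of_ne_zero hN
  -- primitive N-th root of unity in ℂˣ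
  have hξ := Complex.isPrimitiveRoot_exp N hN
  set ξu : ℂˣ := (hξ.isUnit hN).unit with hξudef
  have hξu : IsPrimitiveRoot ξu N := hξ.isUnit_unit hN
  -- primitive N-th root of unity in 𝔽
  have hcastN : (N : 𝔽) ≠ 0 := by
    intro hc
    have h2 : (2 : ℕ) ∣ N := (CharP.cast_eq_zero_iff 𝔽 2 N).1 hc
    rw [Nat.odd_iff] at hNodd
    omega
  haveI : NeZero (N : 𝔽) := ⟨hcastN⟩
  obtain ⟨η, hη⟩ : ∃ η : 𝔽, IsPrimitiveRoot η N := by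
    have h1 : (Polynomial.cyclotomic N 𝔽).degree ≠ 0 := by
      rw [Polynomial.degree_cyclotomic]
      simpa using (Nat.totient_pos.2 hNpos).ne'
    obtain ⟨x, hx⟩ := IsAlgClosed.exists_root _ h1
    exact ⟨x, (Polynomial.isRoot_cyclotomic_iff).1 hx⟩
  set ηu : 𝔽ˣ := (hη.isUnit hN).unit with hηudef
  have hηu : IsPrimitiveRoot ηu N := hη.isUnit_unit hN
  -- the homomorphism from `ZMod N`
  have hfN : (zmultiplesHom (Additive 𝔽ˣ) (Additive.ofMul (ηu ^ (d : ℤ)))) N = 0 := by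
    show (N : ℤ) • Additive.ofMul (ηu ^ (d : ℤ)) = 0
    rw [← ofMul_zpow, ← zpow_mul]
    have he : (d : ℤ) * N = ((N * d : ℕ) : ℤ) := by push_cast; ring
    rw [he, zpow_natCast, pow_mul, hηu.pow_eq_one, one_pow]
    rfl
  let ψ : ZMod N →+ Additive 𝔽ˣ := ZMod.lift N ⟨_, hfN⟩
  let g0 : Additive (Subgroup.zpowers ξu) →+ Additive 𝔽ˣ :=
    ψ.comp hξu.zmodEquivZPowers.symm.toAddMonoidHom
  let ι : Additive (Subgroup.zpowers ξu) →+ Additive ℂˣ :=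
    MonoidHom.toAdditive (Subgroup.zpowers ξu).subtype
  have hι : Function.Injective ι := by
    intro x y hxy
    exact Subtype.ext hxy
  obtain ⟨H, hH⟩ := ((Module.Baer.of_divisible (Additive 𝔽ˣ)).injective).out
    ι.toIntLinearMap hι g0.toIntLinearMap
  -- the character
  let χu : ℂˣ →* 𝔽ˣ := MonoidHom.mk' (fun z => Additive.toMul (H (Additive.ofMul z)))
    (fun a b => by
      have hadd : H (Additive.ofMul (a * b)) = H (Additive.ofMul a) + H (Additive.ofMul b) :=
        H.map_add _ _
      simpa using congrArg Additive.toMul hadd)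
  have key : ∀ j : ℤ, χu (ξu ^ j) = ηu ^ ((d : ℤ) * j) := by
    intro j
    have hx : H (Additive.ofMul (ξu ^ j))
        = g0 (Additive.ofMul (⟨ξu ^ j, j, rfl⟩ : Subgroup.zpowers ξu)) :=
      hH (Additive.ofMul (⟨ξu ^ j, j, rfl⟩ : Subgroup.zpowers ξu))
    have hg : g0 (Additive.ofMul (⟨ξu ^ j, j, rfl⟩ : Subgroup.zpowers ξu))
        = Additive.ofMul (ηu ^ ((d : ℤ) * j)) := by
      show ψ (hξu.zmodEquivZPowers.symm
        (Additive.ofMul (⟨ξu ^ j, j, rfl⟩ : Subgroup.zpowers ξu)))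
        = Additive.ofMul (ηu ^ ((d : ℤ) * j))
      rw [hξu.zmodEquivZPowers_symm_apply_zpow, ZMod.lift_coe]
      show (j : ℤ) • Additive.ofMul (ηu ^ (d : ℤ)) = _
      rw [← ofMul_zpow, ← zpow_mul, mul_comm]
    show Additive.toMul (H (Additive.ofMul (ξu ^ j))) = ηu ^ ((d : ℤ) * j)
    rw [hx, hg]
    rfl
  refine ⟨(Units.coeHom 𝔽).comp χu, ?_⟩
  intro a ha0 haN
  obtain ⟨m, hm⟩ := haN
  have hm0 : m ≠ 0 := by rintro rfl; exact hN (by simpa using hm)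
  -- every a-th root of unity is a power of ξu
  have hmem : ∀ ζ : ℂˣ, ζ ∈ rootsOfUnity a ℂ → ∃ j : ℤ, ξu ^ j = ζ ∧ (N : ℤ) ∣ j * a := by
    intro ζ hζ
    rw [mem_rootsOfUnity] at hζ
    have hζN : ζ ∈ rootsOfUnity N ℂ := by
      rw [mem_rootsOfUnity, hm, pow_mul, hζ, one_pow]
    rw [← hξu.zpowers_eq] at hζN
    obtain ⟨j, hj⟩ := Subgroup.mem_zpowers_iff.1 hζN
    refine ⟨j, hj, ?_⟩
    rw [← hξu.zpow_eq_one_iff_dvd, zpow_mul, hj]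
    exact_mod_cast hζ
  constructor
  · intro htriv
    -- apply to ξu ^ m  (a primitive a-th root)
    have hmema : (ξu ^ (m : ℤ)) ∈ rootsOfUnity a ℂ := by
      rw [mem_rootsOfUnity, ← zpow_natCast (ξu ^ (m : ℤ)) a, ← zpow_mul]
      have hNma : ((m : ℤ) * a) = ((N : ℕ) : ℤ) := by push_cast [hm]; ring
      rw [hNma, zpow_natCast, hξu.pow_eq_one]
    have h1 : ((χu (ξu ^ (m : ℤ)) : 𝔽ˣ) : 𝔽) = 1 := htriv _ hmema
    have h1' : χu (ξu ^ (m : ℤ)) = 1 := Units.ext (by simpa using h1)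
    rw [key] at h1'
    have hdvd : ((N : ℕ) : ℤ) ∣ (d : ℤ) * m := (hηu.zpow_eq_one_iff_dvd _).1 h1'
    -- N = a * m, so a * m ∣ d * m, so a ∣ d
    have ham : (a : ℤ) * m ∣ (d : ℤ) * m := by
      have : ((N : ℕ) : ℤ) = (a : ℤ) * m := by push_cast [hm]; ring
      rwa [this] at hdvd
    have hadvd : (a : ℤ) ∣ (d : ℤ) :=
      (mul_dvd_mul_iff_right (by exact_mod_cast hm0 : (m : ℤ) ≠ 0)).1 ham
    exact_mod_cast hadvd
  · intro had ζ hζ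
    obtain ⟨j, hj, hdvd⟩ := hmem ζ hζ
    obtain ⟨e, he⟩ := had
    have hone : χu ζ = 1 := by
      rw [← hj, key, hηu.zpow_eq_one_iff_dvd]
      have hdj : (d : ℤ) * j = e * (j * a) := by push_cast [he]; ring
      rw [hdj]
      exact Dvd.dvd.mul_left hdvd e
    simp [hone]

lemma lift_lambda (χ : ℂˣ →* 𝔽) {a : ℕ} (ha : a ≠ 0) (hodd : Odd a) :
    (MonoidAlgebra.lift ℤ 𝔽 ℂˣ χ) (Lambda a - 1)
      = if (∀ ζ ∈ rootsOfUnity a ℂ, χ ζ = 1) then 0 else -1 := by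
  haveI : NeZero a := ⟨ha⟩
  haveI : Fintype (rootsOfUnity a ℂ) := Fintype.ofFinite _
  have hL : (MonoidAlgebra.lift ℤ 𝔽 ℂˣ χ) (Lambda a)
      = ∑ ζ : rootsOfUnity a ℂ, χ (ζ : ℂˣ) := by
    rw [Lambda, dif_neg ha, map_sum]
    refine Finset.sum_congr (by convert rfl) fun ζ _ => ?_
    rw [MonoidAlgebra.lift_single, one_smul]
  rw [map_sub, map_one, hL]
  by_cases htriv : ∀ ζ ∈ rootsOfUnity a ℂ, χ ζ = 1
  · rw [if_pos htriv]
    have hsum : ∑ ζ : rootsOfUnity a ℂ, χ (ζ : ℂˣ) = ∑ _ζ : rootsOfUnity a ℂ, (1 : 𝔽) :=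
      Finset.sum_congr rfl fun ζ _ => htriv _ ζ.2
    rw [hsum, Finset.sum_const, Finset.card_univ, Fintype.card_eq_nat_card, Complex.card_rootsOfUnity a,
      nsmul_eq_mul, odd_cast_F hodd, mul_one, sub_self]
  · rw [if_neg htriv]
    push_neg at htriv
    obtain ⟨g, hg, hg1⟩ := htriv
    have hS : χ g * ∑ ζ : rootsOfUnity a ℂ, χ (ζ : ℂˣ)
        = ∑ ζ : rootsOfUnity a ℂ, χ (ζ : ℂˣ) := by
      rw [Finset.mul_sum]
      have hcomp := Equiv.sum_comp (Equiv.mulLeft (⟨g, hg⟩ : rootsOfUnity a ℂ))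
        (fun ζ : rootsOfUnity a ℂ => χ (ζ : ℂˣ))
      rw [← hcomp]
      refine Finset.sum_congr rfl fun ζ _ => ?_
      rw [← map_mul]
      rfl
    have hS0 : ∑ ζ : rootsOfUnity a ℂ, χ (ζ : ℂˣ) = 0 := by
      have hzero : (χ g - 1) * ∑ ζ : rootsOfUnity a ℂ, χ (ζ : ℂˣ) = 0 := by
        rw [sub_mul, one_mul, hS, sub_self]
      rcases mul_eq_zero.1 hzero with h | h
      · exact absurd (sub_eq_zero.1 h) hg1
      · exact h
    rw [hS0, zero_sub]

lemma subset_aux (A B : Finset ℕ)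
    (hA : ∀ a ∈ A, ∀ a' ∈ A, a ≠ a' → ¬ a ∣ a')
    (k1 : ∀ a ∈ A, ∃ b ∈ B, b ∣ a) (k2 : ∀ b ∈ B, ∃ a ∈ A, a ∣ b) :
    A ⊆ B := by
  intro a ha
  obtain ⟨b, hb, hba⟩ := k1 a ha
  obtain ⟨a', ha', ha'b⟩ := k2 b hb
  have haa : a' ∣ a := ha'b.trans hba
  have heq : a' = a := by
    by_contra hne
    exact hA a' ha' a ha hne haa
  subst heq
  have hb' : a' = b := Nat.dvd_antisymm ha'b hba
  rwa [hb']

lemma odd_lcm (s : Finset ℕ) (hs : ∀ c ∈ s, Odd c) : Odd (s.lcm id) := by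
  induction s using Finset.induction_on with
  | empty => simp
  | @insert c t hct ih =>
    rw [Finset.lcm_insert]
    have hc : Odd c := hs c (Finset.mem_insert_self c t)
    have ht : Odd (t.lcm id) := ih (fun x hx => hs x (Finset.mem_insert_of_mem hx))
    have hdvd : Nat.lcm (id c) (t.lcm id) ∣ c * (t.lcm id) := Nat.lcm_dvd_mul _ _
    have hprod : Odd (c * t.lcm id) := hc.mul ht
    rw [Nat.odd_iff] at hprod ⊢
    rcases Nat.even_or_odd (Nat.lcm (id c) (t.lcm id)) with he | ho
    · exfalso
      have h2 : 2 ∣ c * t.lcm id := he.two_dvd.trans hdvd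
      omega
    · exact Nat.odd_iff.1 ho

/-- Let `A` and `B` be finite sets of odd integers `≥ 3` such that within each set no
element divides a different element of the same set. If
`∏_{a ∈ A} (Λ_a - 1) ≡ ∏_{b ∈ B} (Λ_b - 1) (mod 2)` in `ℤ[ℂˣ]`, then `A = B`. -/
theorem odd_exponent_sets_eq (A B : Finset ℕ)
    (hA3 : ∀ a ∈ A, 3 ≤ a ∧ Odd a) (hB3 : ∀ b ∈ B, 3 ≤ b ∧ Odd b)
    (hA : ∀ a ∈ A, ∀ a' ∈ A, a ≠ a' → ¬ a ∣ a')
    (hB : ∀ b ∈ B, ∀ b' ∈ B, b ≠ b' → ¬ b ∣ b')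
    (h : Mod2 (∏ a ∈ A, (Lambda a - 1)) (∏ b ∈ B, (Lambda b - 1))) :
    A = B := by
  classical
  set N : ℕ := (A ∪ B).lcm id with hNdef
  have hdvdN : ∀ c ∈ A ∪ B, c ∣ N := fun c hc => Finset.dvd_lcm hc
  have hNodd : Odd N := by
    refine odd_lcm _ ?_
    intro c hc
    rcases Finset.mem_union.1 hc with h' | h'
    · exact (hA3 c h').2
    · exact (hB3 c h').2
  have hN0 : N ≠ 0 := by
    intro h0
    rw [h0] at hNodd
    simpa using hNodd
  have key : ∀ d : ℕ, d ≠ 0 → d ∣ N → ((∃ a ∈ A, a ∣ d) ↔ (∃ b ∈ B, b ∣ d)) := by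
    intro d hd0 hdN
    obtain ⟨χ, hχ⟩ := exists_char hN0 hNodd hdN
    set φ := MonoidAlgebra.lift ℤ 𝔽 ℂˣ χ with hφdef
    obtain ⟨z, hz⟩ := h
    have hφ2 : φ (∏ a ∈ A, (Lambda a - 1)) = φ (∏ b ∈ B, (Lambda b - 1)) := by
      have hc := congrArg φ hz
      rw [map_sub, map_mul, map_ofNat, F_char_two, zero_mul, sub_eq_zero] at hc
      exact hc
    rw [map_prod, map_prod] at hφ2
    have prodiff : ∀ (S : Finset ℕ), (∀ s ∈ S, 3 ≤ s ∧ Odd s) → (∀ s ∈ S, s ∣ N) →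
        ((∏ s ∈ S, φ (Lambda s - 1)) = 0 ↔ ∃ s ∈ S, s ∣ d) := by
      intro S hS3 hSN
      rw [Finset.prod_eq_zero_iff]
      constructor
      · rintro ⟨s, hs, hval⟩
        have hodd := (hS3 s hs).2
        have hne : s ≠ 0 := by have := (hS3 s hs).1; omega
        rw [hφdef, lift_lambda χ hne hodd] at hval
        by_cases ht : ∀ ζ ∈ rootsOfUnity s ℂ, χ ζ = 1
        · exact ⟨s, hs, (hχ s hne (hSN s hs)).1 ht⟩
        · rw [if_neg ht] at hval
          exact absurd hval (neg_ne_zero.2 one_ne_zero)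
      · rintro ⟨s, hs, hsd⟩
        have hne : s ≠ 0 := by have := (hS3 s hs).1; omega
        refine ⟨s, hs, ?_⟩
        rw [hφdef, lift_lambda χ hne (hS3 s hs).2,
          if_pos ((hχ s hne (hSN s hs)).2 hsd)]
    have hAiff := prodiff A hA3 (fun s hs => hdvdN s (Finset.mem_union_left _ hs))
    have hBiff := prodiff B hB3 (fun s hs => hdvdN s (Finset.mem_union_right _ hs))
    rw [← hAiff, ← hBiff, hφ2]
  have k1 : ∀ a ∈ A, ∃ b ∈ B, b ∣ a := by
    intro a ha
    have h3 := (hA3 a ha).1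
    exact (key a (by omega) (hdvdN a (Finset.mem_union_left _ ha))).1 ⟨a, ha, dvd_rfl⟩
  have k2 : ∀ b ∈ B, ∃ a ∈ A, a ∣ b := by
    intro b hb
    have h3 := (hB3 b hb).1
    exact (key b (by omega) (hdvdN b (Finset.mem_union_right _ hb))).2 ⟨b, hb, dvd_rfl⟩
  exact Finset.Subset.antisymm (subset_aux A B hA k1 k2) (subset_aux B A hB k2 k1)
end
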